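/- arXiv:2202.05642 — 6 statements merged into one kernel-verified Lean document; each statement's English description precedes it below -/
import Mathlib

section
/- Let b = (b_ij) be a real 2×2 matrix with Δ := (b22 − b11)² + 4·b12·b21 > 0 and b12·b21 ≠ 0, and set λ1 = (−b11 − b22 + √Δ)/2, λ2 = λ1 − √Δ. Then for all t ≥ 0, the row sums π'₁(0,t), π'₂(0,t) of exp(−t·b) satisfy: π'₁(0,t) = [b12·(b22 − b11 + 2·b21 − √Δ) / (√Δ·(√Δ + b11 − b22))]·e^{λ1 t} − [b12·(√Δ + b22 − b11 + 2·b21) / (√Δ·(−√Δ + b11 − b22))]·e^{λ2 t}, and π'₂(0,t) = [(b11 − b22 − 2·b21 + √Δ)/(2√Δ)]·e^{λ1 t} + [(√Δ + b22 − b11 + 2·b21)/(2√Δ)]·e^{λ2 t}. (The hypotheses Δ > 0 and b12·b21 ≠ 0 guarantee √Δ ≠ |b11 − b22|, so all denominators are nonzero.) -/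
open Matrix Real

noncomputable def rowSum0 (b : Matrix (Fin 2) (Fin 2) ℝ) (t : ℝ) (i : Fin 2) : ℝ :=
  (NormedSpace.exp ((-t) • b) *ᵥ ![1, 1]) i

set_option maxHeartbeats 1000000 in
/-- Explicit formulas for the row sums `π'₁(0,t)`, `π'₂(0,t)` of `exp(−t·b)` in terms of
`λ1 = (−b11 − b22 + √Δ)/2` and `λ2 = λ1 − √Δ`, when `Δ = (b22 − b11)² + 4 b12 b21 > 0`
and `b12 b21 ≠ 0`. -/
theorem stmt3 (b : Matrix (Fin 2) (Fin 2) ℝ)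
    (Δ : ℝ) (hΔdef : Δ = (b 1 1 - b 0 0) ^ 2 + 4 * b 0 1 * b 1 0) (hΔ : 0 < Δ)
    (hb : b 0 1 * b 1 0 ≠ 0)
    (lam1 lam2 : ℝ)
    (hlam1 : lam1 = (-(b 0 0) - b 1 1 + Real.sqrt Δ) / 2)
    (hlam2 : lam2 = lam1 - Real.sqrt Δ) :
    ∀ t : ℝ, 0 ≤ t →
      rowSum0 b t 0
        = b 0 1 * (b 1 1 - b 0 0 + 2 * b 1 0 - Real.sqrt Δ)
              / (Real.sqrt Δ * (Real.sqrt Δ + b 0 0 - b 1 1)) * Real.exp (lam1 * t)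
          - b 0 1 * (Real.sqrt Δ + b 1 1 - b 0 0 + 2 * b 1 0)
              / (Real.sqrt Δ * (-Real.sqrt Δ + b 0 0 - b 1 1)) * Real.exp (lam2 * t) ∧
      rowSum0 b t 1
        = (b 0 0 - b 1 1 - 2 * b 1 0 + Real.sqrt Δ) / (2 * Real.sqrt Δ) * Real.exp (lam1 * t)
          + (Real.sqrt Δ + b 1 1 - b 0 0 + 2 * b 1 0) / (2 * Real.sqrt Δ)
              * Real.exp (lam2 * t) := by
  intro t ht
  set s := Real.sqrt Δ with hsdef
  have hs2 : s ^ 2 = (b 1 1 - b 0 0) ^ 2 + 4 * b 0 1 * b 1 0 := by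
    rw [hsdef, Real.sq_sqrt hΔ.le, hΔdef]
  have hs0 : 0 < s := Real.sqrt_pos.mpr hΔ
  have hb01 : b 0 1 ≠ 0 := fun h => hb (by rw [h]; ring)
  have hfac : (s + b 0 0 - b 1 1) * (s + b 1 1 - b 0 0) = 4 * (b 0 1 * b 1 0) := by
    linear_combination hs2
  have h4 : (4 : ℝ) * (b 0 1 * b 1 0) ≠ 0 := by
    simpa using hb
  have h1 : s + b 0 0 - b 1 1 ≠ 0 := fun h => h4 (by rw [← hfac, h, zero_mul])
  have h2 : s + b 1 1 - b 0 0 ≠ 0 := fun h => h4 (by rw [← hfac, h, mul_zero])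
  -- eigenvector matrix
  set P : Matrix (Fin 2) (Fin 2) ℝ :=
    !![b 0 1, b 0 1; (b 1 1 - b 0 0 + s)/2, (b 1 1 - b 0 0 - s)/2] with hP
  have hPdet : P.det = -(b 0 1 * s) := by
    rw [hP]; simp [Matrix.det_fin_two_of]; ring
  have hPdet0 : P.det ≠ 0 := by
    rw [hPdet]; exact neg_ne_zero.mpr (mul_ne_zero hb01 hs0.ne')
  have hPunit : IsUnit P := (Matrix.isUnit_iff_isUnit_det P).mpr (isUnit_iff_ne_zero.mpr hPdet0)
  have hkey : ((-t) • b) * P = P * Matrix.diagonal ![lam2 * t, lam1 * t] := by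
    ext i j
    fin_cases i <;> fin_cases j <;>
      simp [hP, Matrix.mul_apply, Fin.sum_univ_two, Matrix.diagonal, hlam2, hlam1] <;>
      ring_nf <;> linear_combination (t/4) * hs2
  have hconj : (-t) • b = P * Matrix.diagonal ![lam2 * t, lam1 * t] * P⁻¹ := by
    rw [← hkey, Matrix.mul_nonsing_inv_cancel_right _ _ (isUnit_iff_ne_zero.mpr hPdet0)]
  have hexp : NormedSpace.exp ((-t) • b)
      = P * Matrix.diagonal ![Real.exp (lam2 * t), Real.exp (lam1 * t)] * P⁻¹ := by
    rw [hconj, Matrix.exp_conj P (Matrix.diagonal ![lam2 * t, lam1 * t]) hPunit,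
      Matrix.exp_diagonal]
    have hv : NormedSpace.exp (![lam2 * t, lam1 * t])
        = ![Real.exp (lam2 * t), Real.exp (lam1 * t)] := by
      funext i
      rw [Pi.coe_exp]
      fin_cases i <;> simp [← Real.exp_eq_exp_ℝ]
    rw [hv]
  set Q : Matrix (Fin 2) (Fin 2) ℝ :=
    !![(b 1 1 - b 0 0 - s) / 2 / (-(b 0 1 * s)), -(b 0 1) / (-(b 0 1 * s));
       -((b 1 1 - b 0 0 + s) / 2) / (-(b 0 1 * s)), b 0 1 / (-(b 0 1 * s))] with hQ
  have hPQ : P * Q = 1 := by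
    ext i j
    fin_cases i <;> fin_cases j <;>
      simp [hP, hQ, Matrix.mul_apply, Fin.sum_univ_two, Matrix.one_apply] <;>
      field_simp <;> ring
  have hPinv : P⁻¹ = Q := Matrix.inv_eq_right_inv hPQ
  have key : ∀ i : Fin 2, rowSum0 b t i
      = P i 0 * Real.exp (lam2 * t) * (Q 0 0 + Q 0 1)
        + P i 1 * Real.exp (lam1 * t) * (Q 1 0 + Q 1 1) := by
    intro i
    show (NormedSpace.exp ((-t) • b) *ᵥ ![1, 1]) i = _
    rw [hexp, hPinv]
    simp [Matrix.mulVec, dotProduct, Matrix.mul_apply, Fin.sum_univ_two,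
      Matrix.diagonal_apply]
    ring
  have hQ00 : Q 0 0 = (b 1 1 - b 0 0 - s) / 2 / (-(b 0 1 * s)) := by rw [hQ]; rfl
  have hQ01 : Q 0 1 = -(b 0 1) / (-(b 0 1 * s)) := by rw [hQ]; rfl
  have hQ10 : Q 1 0 = -((b 1 1 - b 0 0 + s) / 2) / (-(b 0 1 * s)) := by rw [hQ]; rfl
  have hQ11 : Q 1 1 = b 0 1 / (-(b 0 1 * s)) := by rw [hQ]; rfl
  have hP00 : P 0 0 = b 0 1 := by rw [hP]; rfl
  have hP01 : P 0 1 = b 0 1 := by rw [hP]; rfl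
  have hP10 : P 1 0 = (b 1 1 - b 0 0 + s) / 2 := by rw [hP]; rfl
  have hP11 : P 1 1 = (b 1 1 - b 0 0 - s) / 2 := by rw [hP]; rfl
  have hne : -(b 0 1 * s) ≠ 0 := neg_ne_zero.mpr (mul_ne_zero hb01 hs0.ne')
  have h2' : -s + b 0 0 - b 1 1 ≠ 0 := fun h => h2 (by linarith)
  have c1 : b 0 1 * (Q 1 0 + Q 1 1)
      = b 0 1 * (b 1 1 - b 0 0 + 2 * b 1 0 - s) / (s * (s + b 0 0 - b 1 1)) := by
    rw [hQ10, hQ11]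
    field_simp [hb01, hs0.ne', h1, h2']
    ring_nf
    linear_combination hfac
  have c2 : b 0 1 * (Q 0 0 + Q 0 1)
      = -(b 0 1 * (s + b 1 1 - b 0 0 + 2 * b 1 0) / (s * (-s + b 0 0 - b 1 1))) := by
    rw [hQ00, hQ01]
    field_simp [hb01, hs0.ne', h1, h2']
    ring_nf
    linear_combination (-1) * hfac
  have c3 : (b 1 1 - b 0 0 - s) / 2 * (Q 1 0 + Q 1 1)
      = (b 0 0 - b 1 1 - 2 * b 1 0 + s) / (2 * s) := by
    rw [hQ10, hQ11]
    field_simp [hb01, hs0.ne', h1, h2']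
    ring_nf
    linear_combination (-1) * hfac
  have c4 : (b 1 1 - b 0 0 + s) / 2 * (Q 0 0 + Q 0 1)
      = (s + b 1 1 - b 0 0 + 2 * b 1 0) / (2 * s) := by
    rw [hQ00, hQ01]
    field_simp [hb01, hs0.ne', h1, h2']
    ring_nf
    linear_combination hfac
  constructor
  · rw [key 0, hP00, hP01]
    linear_combination Real.exp (lam2 * t) * c2 + Real.exp (lam1 * t) * c1
  · rw [key 1, hP10, hP11]
    linear_combination Real.exp (lam2 * t) * c4 + Real.exp (lam1 * t) * c3
end

section
/- Let b = (b_ij) be a real 2×2 matrix with b12 < 0 and b21 < 0 (so that Δ := (b22 − b11)² + 4·b12·b21 > 0 and √Δ + b11 − b22 > 0), set λ1 = (−b11 − b22 + √Δ)/2, λ2 = λ1 − √Δ and ε := √Δ + b22 − b11 + 2·b21, and suppose ε < 0. Then θ₁₁ := −b12·(2√Δ − ε)/(√Δ·(√Δ + b11 − b22)) lies in (0,1), θ₁₂ := (2√Δ − ε)/(2√Δ) > 0, and for all t ≥ 0 the row sums of exp(−t·b) satisfy π'₁(0,t) = θ₁₁·e^{λ1 t} + (1 − θ₁₁)·e^{λ2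 t} and π'₂(0,t) ≤ θ₁₂·e^{λ1 t} + e^{λ2 t}. -/
open Matrix Real

lemma exp_conj_diag (C Cinv : Matrix (Fin 2) (Fin 2) ℝ)
    (h1 : C * Cinv = 1) (h2 : Cinv * C = 1) (v : Fin 2 → ℝ) :
    NormedSpace.exp (C * Matrix.diagonal v * Cinv)
      = C * Matrix.diagonal (fun i => Real.exp (v i)) * Cinv := by
  let U : (Matrix (Fin 2) (Fin 2) ℝ)ˣ := ⟨C, Cinv, h1, h2⟩
  have hU : C = ↑U := rfl
  have hUinv : Cinv = ↑U⁻¹ := rfl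
  have hv : NormedSpace.exp v = fun i => Real.exp (v i) := by
    funext i
    rw [Pi.exp_def]
    exact (congrFun Real.exp_eq_exp_ℝ (v i)).symm
  rw [hU, hUinv, Matrix.exp_units_conj, Matrix.exp_diagonal, hv]

lemma rowSum0_formula (b C Cinv : Matrix (Fin 2) (Fin 2) ℝ)
    (μ1 μ2 : ℝ) (h1 : C * Cinv = 1) (h2 : Cinv * C = 1)
    (hb : b = C * Matrix.diagonal ![μ1, μ2] * Cinv) (t : ℝ) (i : Fin 2) :
    rowSum0 b t i
      = ((C * Matrix.diagonal ![Real.exp (-t * μ1), Real.exp (-t * μ2)] * Cinv) *ᵥ ![1, 1]) i := by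
  have hsm : (-t) • b = C * Matrix.diagonal ((-t) • ![μ1, μ2]) * Cinv := by
    rw [hb, ← smul_mul_assoc, ← mul_smul_comm, ← Matrix.diagonal_smul]
  have hvec : (fun j => Real.exp (((-t) • ![μ1, μ2] : Fin 2 → ℝ) j))
      = ![Real.exp (-t * μ1), Real.exp (-t * μ2)] := by
    funext j
    fin_cases j <;> simp
  rw [rowSum0, hsm, exp_conj_diag C Cinv h1 h2, hvec]

lemma diag2 (a c : ℝ) : Matrix.diagonal ![a, c] = !![a, 0; 0, c] := by
  ext i j
  fin_cases i <;> fin_cases j <;> simp [Matrix.diagonal]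

lemma mulvec_row (c00 c01 c10 c11 d00 d01 d10 d11 x y : ℝ) :
    ((!![c00,c01;c10,c11] * Matrix.diagonal ![x,y] * !![d00,d01;d10,d11]) *ᵥ ![1,1]) 0
      = c00*x*(d00+d01) + c01*y*(d10+d11)
    ∧ ((!![c00,c01;c10,c11] * Matrix.diagonal ![x,y] * !![d00,d01;d10,d11]) *ᵥ ![1,1]) 1
      = c10*x*(d00+d01) + c11*y*(d10+d11) := by
  rw [diag2]
  constructor <;>
    · simp [Matrix.mulVec, Matrix.mul_apply, dotProduct, Fin.sum_univ_two]
      ring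

set_option maxHeartbeats 1000000 in
lemma general (b00 b01 b10 b11 s t : ℝ) (hs : s ≠ 0) (hb01 : b01 ≠ 0)
    (hs2 : s ^ 2 = (b11 - b00) ^ 2 + 4 * b01 * b10) :
    rowSum0 !![b00,b01;b10,b11] t 0 =
      ((s + b11 - b00 - 2*b01)/(2*s)) * Real.exp (-t*((b00+b11-s)/2))
      + ((s + b00 - b11 + 2*b01)/(2*s)) * Real.exp (-t*((b00+b11+s)/2))
    ∧ rowSum0 !![b00,b01;b10,b11] t 1 =
      ((s + b00 - b11 - 2*b10)/(2*s)) * Real.exp (-t*((b00+b11-s)/2))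
      + ((s - b00 + b11 + 2*b10)/(2*s)) * Real.exp (-t*((b00+b11+s)/2)) := by
  have h1 : (!![b00,b01;b10,b11] : Matrix (Fin 2) (Fin 2) ℝ) = !![b00,b01;b10,b11] := rfl
  set C : Matrix (Fin 2) (Fin 2) ℝ :=
    !![b01, b01; (b11 - b00 + s)/2, (b11 - b00 - s)/2] with hCdef
  set Ci : Matrix (Fin 2) (Fin 2) ℝ :=
    !![(b11 - b00 - s)/(-2*b01*s), 1/s; -(b11 - b00 + s)/(-2*b01*s), -(1/s)] with hCidef
  have hCC : C * Ci = 1 := by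
    rw [hCdef, hCidef]
    ext i j
    fin_cases i <;> fin_cases j <;>
      simp [Matrix.mul_apply, Fin.sum_univ_two, Matrix.one_apply] <;>
      field_simp <;> ring
  have hCiC : Ci * C = 1 := by
    rw [hCdef, hCidef]
    ext i j
    fin_cases i <;> fin_cases j <;>
      simp [Matrix.mul_apply, Fin.sum_univ_two, Matrix.one_apply] <;>
      field_simp <;> ring
  have hbC : !![b00,b01;b10,b11] * C
      = C * Matrix.diagonal ![(b00 + b11 + s)/2, (b00 + b11 - s)/2] := by
    rw [diag2, hCdef]
    ext i j
    fin_cases i <;> fin_cases j <;>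
      simp [Matrix.mul_apply, Fin.sum_univ_two] <;>
      first
        | ring1
        | linear_combination (1/4 : ℝ) * hs2
        | linear_combination (-1/4 : ℝ) * hs2
  have hb : (!![b00,b01;b10,b11] : Matrix (Fin 2) (Fin 2) ℝ)
      = C * Matrix.diagonal ![(b00 + b11 + s)/2, (b00 + b11 - s)/2] * Ci := by
    rw [← hbC, Matrix.mul_assoc, hCC, Matrix.mul_one]
  have hrs := rowSum0_formula !![b00,b01;b10,b11] C Ci
    ((b00 + b11 + s)/2) ((b00 + b11 - s)/2) hCC hCiC hb t
  set x : ℝ := Real.exp (-t * ((b00 + b11 + s)/2)) with hx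
  set y : ℝ := Real.exp (-t * ((b00 + b11 - s)/2)) with hy
  have k1 : b01 * ((b11 - b00 - s)/(-2*b01*s) + 1/s) = (s + b00 - b11 + 2*b01)/(2*s) := by
    field_simp
    ring
  have k2 : b01 * (-(b11 - b00 + s)/(-2*b01*s) + -(1/s)) = (s + b11 - b00 - 2*b01)/(2*s) := by
    field_simp
    ring
  have k3 : ((b11 - b00 + s)/2) * ((b11 - b00 - s)/(-2*b01*s) + 1/s)
      = (s - b00 + b11 + 2*b10)/(2*s) := by
    field_simp
    linear_combination hs2
  have k4 : ((b11 - b00 - s)/2) * (-(b11 - b00 + s)/(-2*b01*s) + -(1/s))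
      = (s + b00 - b11 - 2*b10)/(2*s) := by
    field_simp
    linear_combination (-1) * hs2
  constructor
  · rw [hrs 0, hCdef, hCidef,
      (mulvec_row b01 b01 ((b11 - b00 + s)/2) ((b11 - b00 - s)/2)
        ((b11 - b00 - s)/(-2*b01*s)) (1/s) (-(b11 - b00 + s)/(-2*b01*s)) (-(1/s)) x y).1]
    linear_combination x * k1 + y * k2
  · rw [hrs 1, hCdef, hCidef,
      (mulvec_row b01 b01 ((b11 - b00 + s)/2) ((b11 - b00 - s)/2)
        ((b11 - b00 - s)/(-2*b01*s)) (1/s) (-(b11 - b00 + s)/(-2*b01*s)) (-(1/s)) x y).2]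
    linear_combination x * k3 + y * k4

set_option maxHeartbeats 1000000 in
/-- If `b12 < 0`, `b21 < 0` (so `Δ = (b22 − b11)² + 4 b12 b21 > 0` and
`√Δ + b11 − b22 > 0`) and `ε = √Δ + b22 − b11 + 2 b21 < 0`, then with
`θ₁₁ = −b12(2√Δ − ε)/(√Δ(√Δ + b11 − b22)) ∈ (0,1)` and `θ₁₂ = (2√Δ − ε)/(2√Δ) > 0`
one has `π'₁(0,t) = θ₁₁ e^{λ1 t} + (1 − θ₁₁) e^{λ2 t}` and
`π'₂(0,t) ≤ θ₁₂ e^{λ1 t} + e^{λ2 t}` for all `t ≥ 0`. -/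
theorem stmt4 (b : Matrix (Fin 2) (Fin 2) ℝ)
    (hb12 : b 0 1 < 0) (hb21 : b 1 0 < 0)
    (Δ : ℝ) (hΔdef : Δ = (b 1 1 - b 0 0) ^ 2 + 4 * b 0 1 * b 1 0) (hΔ : 0 < Δ)
    (hden : 0 < Real.sqrt Δ + b 0 0 - b 1 1)
    (lam1 lam2 eps : ℝ)
    (hlam1 : lam1 = (-(b 0 0) - b 1 1 + Real.sqrt Δ) / 2)
    (hlam2 : lam2 = lam1 - Real.sqrt Δ)
    (heps : eps = Real.sqrt Δ + b 1 1 - b 0 0 + 2 * b 1 0)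
    (hepsneg : eps < 0)
    (θ₁₁ θ₁₂ : ℝ)
    (hθ₁₁ : θ₁₁ = -(b 0 1) * (2 * Real.sqrt Δ - eps)
        / (Real.sqrt Δ * (Real.sqrt Δ + b 0 0 - b 1 1)))
    (hθ₁₂ : θ₁₂ = (2 * Real.sqrt Δ - eps) / (2 * Real.sqrt Δ)) :
    θ₁₁ ∈ Set.Ioo (0 : ℝ) 1 ∧ 0 < θ₁₂ ∧
    ∀ t : ℝ, 0 ≤ t →
      rowSum0 b t 0 = θ₁₁ * Real.exp (lam1 * t) + (1 - θ₁₁) * Real.exp (lam2 * t) ∧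
      rowSum0 b t 1 ≤ θ₁₂ * Real.exp (lam1 * t) + Real.exp (lam2 * t) := by
  have hspos : 0 < Real.sqrt Δ := Real.sqrt_pos.mpr hΔ
  set s : ℝ := Real.sqrt Δ with hsdef
  have hs2 : s ^ 2 = (b 1 1 - b 0 0) ^ 2 + 4 * b 0 1 * b 1 0 := by
    rw [hsdef, Real.sq_sqrt hΔ.le, hΔdef]
  have hsne : s ≠ 0 := hspos.ne'
  have hb01ne : b 0 1 ≠ 0 := hb12.ne
  have hcpos : 0 < s + b 1 1 - b 0 0 := by
    nlinarith [mul_pos (neg_pos.2 hb12) (neg_pos.2 hb21)]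
  have ha2 : 0 < s + b 0 0 - b 1 1 + 2 * b 0 1 := by
    have hc2 : s + b 1 1 - b 0 0 < -(2 * b 1 0) := by rw [heps] at hepsneg; linarith
    nlinarith [hcpos, hden, hb12, hb21]
  have hθ₁₁' : θ₁₁ = (s + b 1 1 - b 0 0 - 2 * b 0 1) / (2 * s) := by
    rw [hθ₁₁, heps]
    rw [div_eq_div_iff (by positivity) (by positivity)]
    nlinarith [hs2]
  have hθ₁₂' : θ₁₂ = (s + b 0 0 - b 1 1 - 2 * b 1 0) / (2 * s) := by
    rw [hθ₁₂, heps]; ring_nf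
  have hθ₁₂pos : 0 < θ₁₂ := by
    rw [hθ₁₂']; exact div_pos (by linarith) (by linarith)
  have hθ₁₁mem : θ₁₁ ∈ Set.Ioo (0 : ℝ) 1 := by
    constructor
    · rw [hθ₁₁']; exact div_pos (by linarith) (by linarith)
    · rw [hθ₁₁', div_lt_one (by linarith)]; linarith
  refine ⟨hθ₁₁mem, hθ₁₂pos, fun t ht => ?_⟩
  have G := general (b 0 0) (b 0 1) (b 1 0) (b 1 1) s t hsne hb01ne hs2
  rw [← Matrix.eta_fin_two b] at G
  have hE1 : Real.exp (lam1 * t) = Real.exp (-t * ((b 0 0 + b 1 1 - s)/2)) := by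
    congr 1; rw [hlam1]; ring
  have hE2 : Real.exp (lam2 * t) = Real.exp (-t * ((b 0 0 + b 1 1 + s)/2)) := by
    congr 1; rw [hlam2, hlam1]; ring
  set x : ℝ := Real.exp (-t * ((b 0 0 + b 1 1 + s)/2)) with hx
  set y : ℝ := Real.exp (-t * ((b 0 0 + b 1 1 - s)/2)) with hy
  have hxpos : 0 < x := Real.exp_pos _
  have hc1 : (1 : ℝ) - (s + b 1 1 - b 0 0 - 2 * b 0 1) / (2 * s)
      = (s + b 0 0 - b 1 1 + 2 * b 0 1) / (2 * s) := by
    rw [sub_eq_iff_eq_add, ← add_div, eq_div_iff (by positivity)]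
    ring
  have hc2 : (1 : ℝ) - (s + b 0 0 - b 1 1 - 2 * b 1 0) / (2 * s)
      = (s - b 0 0 + b 1 1 + 2 * b 1 0) / (2 * s) := by
    rw [sub_eq_iff_eq_add, ← add_div, eq_div_iff (by positivity)]
    ring
  constructor
  · rw [G.1, hE1, hE2, hθ₁₁', hc1]
  · have heq : rowSum0 b t 1 = θ₁₂ * y + (1 - θ₁₂) * x := by
      rw [G.2, hθ₁₂', hc2]
    rw [heq, hE1, hE2]
    nlinarith [mul_pos hθ₁₂pos hxpos]
end

section
/- Let b = (b_ij) be a real 2×2 matrix with b12 < 0 and b21 < 0 (so that Δ := (b22 − b11)² + 4·b12·b21 > 0 and √Δ + b11 − b22 > 0), set λ1 = (−b11 − b22 + √Δ)/2, λ2 = λ1 − √Δ and ε := √Δ + b22 − b11 + 2·b21, and suppose ε > 0. Then θ₂₁ := −b12·(2√Δ − ε)/(√Δ·(√Δ + b11 − b22)) > 0, θ₂₂ := (2√Δ − ε)/(2√Δ) lies in (0,1), and for all t ≥ 0 the row sums of exp(−t·b) satisfy π'₁(0,t) ≤ θ₂₁·e^{λ1 t} + e^{λ2 t} and π'₂(0,t)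 = θ₂₂·e^{λ1 t} + (1 − θ₂₂)·e^{λ2 t}. -/
open Matrix Real

set_option maxHeartbeats 1000000 in
/-- If `b12 < 0`, `b21 < 0` (so `Δ = (b22 − b11)² + 4 b12 b21 > 0` and
`√Δ + b11 − b22 > 0`) and `ε = √Δ + b22 − b11 + 2 b21 < 0`, then with
`θ₂₁ = −b12(2√Δ − ε)/(√Δ(√Δ + b11 − b22)) ∈ (0,1)` and `θ₂₂ = (2√Δ − ε)/(2√Δ) > 0`
one has `π'₁(0,t) = θ₂₁ e^{λ1 t} + (1 − θ₂₁) e^{λ2 t}` and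
`π'₂(0,t) ≤ θ₂₂ e^{λ1 t} + e^{λ2 t}` for all `t ≥ 0`. -/
theorem stmt5 (b : Matrix (Fin 2) (Fin 2) ℝ)
    (hb12 : b 0 1 < 0) (hb21 : b 1 0 < 0)
    (Δ : ℝ) (hΔdef : Δ = (b 1 1 - b 0 0) ^ 2 + 4 * b 0 1 * b 1 0) (hΔ : 0 < Δ)
    (hden : 0 < Real.sqrt Δ + b 0 0 - b 1 1)
    (lam1 lam2 eps : ℝ)
    (hlam1 : lam1 = (-(b 0 0) - b 1 1 + Real.sqrt Δ) / 2)
    (hlam2 : lam2 = lam1 - Real.sqrt Δ)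
    (heps : eps = Real.sqrt Δ + b 1 1 - b 0 0 + 2 * b 1 0)
    (hepspos : 0 < eps)
    (θ₂₁ θ₂₂ : ℝ)
    (hθ₂₁ : θ₂₁ = -(b 0 1) * (2 * Real.sqrt Δ - eps)
        / (Real.sqrt Δ * (Real.sqrt Δ + b 0 0 - b 1 1)))
    (hθ₂₂ : θ₂₂ = (2 * Real.sqrt Δ - eps) / (2 * Real.sqrt Δ)) :
    0 < θ₂₁ ∧ θ₂₂ ∈ Set.Ioo (0 : ℝ) 1 ∧
    ∀ t : ℝ, 0 ≤ t →
      rowSum0 b t 0 ≤ θ₂₁ * Real.exp (lam1 * t) + Real.exp (lam2 * t) ∧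
      rowSum0 b t 1 = θ₂₂ * Real.exp (lam1 * t) + (1 - θ₂₂) * Real.exp (lam2 * t) := by
  subst hlam2
  subst hlam1
  have hs : 0 < Real.sqrt Δ := Real.sqrt_pos.2 hΔ
  have hs2 : Real.sqrt Δ ^ 2 = Δ := Real.sq_sqrt hΔ.le
  set s := Real.sqrt Δ with hsdef
  have hq : 0 < s + b 1 1 - b 0 0 := by rw [heps] at hepspos; linarith
  have hp : 0 < s + b 0 0 - b 1 1 := hden
  have hb01 : b 0 1 ≠ 0 := ne_of_lt hb12
  have hsne : s ≠ 0 := ne_of_gt hs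
  have hpq : (s + b 0 0 - b 1 1) * (s + b 1 1 - b 0 0) = 4 * b 0 1 * b 1 0 := by
    rw [hΔdef] at hs2; linear_combination hs2
  have hθ₂₁' : θ₂₁ = (s + b 1 1 - b 0 0 - 2 * b 0 1) / (2 * s) := by
    rw [hθ₂₁, heps, div_eq_div_iff (by positivity) (by positivity)]
    linear_combination (-s) * hpq
  have hθ₂₂' : θ₂₂ = (s + b 0 0 - b 1 1 - 2 * b 1 0) / (2 * s) := by
    rw [hθ₂₂, heps]; ring
  refine ⟨?_, ⟨?_, ?_⟩, ?_⟩
  · rw [hθ₂₁']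
    apply div_pos (by linarith) (by positivity)
  · rw [hθ₂₂']
    apply div_pos (by linarith) (by positivity)
  · rw [hθ₂₂', div_lt_one (by positivity)]
    rw [heps] at hepspos; linarith
  intro t ht
  set e1 : ℝ := Real.exp ((-b 0 0 - b 1 1 + s) / 2 * t) with he1
  set e2 : ℝ := Real.exp (((-b 0 0 - b 1 1 + s) / 2 - s) * t) with he2
  have he1pos : 0 < e1 := Real.exp_pos _
  have he2pos : 0 < e2 := Real.exp_pos _
  set U : Matrix (Fin 2) (Fin 2) ℝ :=
    !![-2 * b 0 1, -2 * b 0 1; s + b 0 0 - b 1 1, -(s + b 1 1 - b 0 0)] with hU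
  set V : Matrix (Fin 2) (Fin 2) ℝ :=
    !![-(s + b 1 1 - b 0 0) / (4 * b 0 1 * s), 2 * b 0 1 / (4 * b 0 1 * s);
       -(s + b 0 0 - b 1 1) / (4 * b 0 1 * s), -2 * b 0 1 / (4 * b 0 1 * s)] with hV
  set D : Matrix (Fin 2) (Fin 2) ℝ :=
    Matrix.diagonal ![(-b 0 0 - b 1 1 + s) / 2 * t, ((-b 0 0 - b 1 1 + s) / 2 - s) * t] with hD
  have hUV : U * V = 1 := by
    ext i j
    fin_cases i <;> fin_cases j <;>
      simp [hU, hV, Matrix.mul_apply, Fin.sum_univ_two, Matrix.one_apply] <;>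
      field_simp <;> ring
  have hVU : V * U = 1 := by
    ext i j
    fin_cases i <;> fin_cases j <;>
      simp [hU, hV, Matrix.mul_apply, Fin.sum_univ_two, Matrix.one_apply] <;>
      field_simp <;> ring
  have hAU : ((-t) • b) * U = U * D := by
    ext i j
    fin_cases i <;> fin_cases j <;>
      simp [hU, hD, Matrix.mul_apply, Fin.sum_univ_two, Matrix.diagonal_apply,
        Matrix.smul_apply] <;>
      first
        | ring1
        | linear_combination (t / 2) * hpq
        | linear_combination (-(t / 2)) * hpq
  have hA : (-t) • b = U * D * V := by
    calc (-t) • b = ((-t) • b) * (U * V) := by rw [hUV, mul_one]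
    _ = (((-t) • b) * U) * V := by rw [mul_assoc]
    _ = U * D * V := by rw [hAU]
  set Uu : (Matrix (Fin 2) (Fin 2) ℝ)ˣ := ⟨U, V, hUV, hVU⟩ with hUu
  have hexp : NormedSpace.exp ((-t) • b) = U * NormedSpace.exp D * V := by
    rw [hA]
    exact Matrix.exp_units_conj Uu D
  have hv : NormedSpace.exp
      (![(-b 0 0 - b 1 1 + s) / 2 * t, ((-b 0 0 - b 1 1 + s) / 2 - s) * t] : Fin 2 → ℝ)
      = ![e1, e2] := by
    funext i
    fin_cases i <;> simp [he1, he2, ← Real.exp_eq_exp_ℝ]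
  have hexpD : NormedSpace.exp D = !![e1, 0; 0, e2] := by
    rw [hD, Matrix.exp_diagonal, hv]
    ext i j
    fin_cases i <;> fin_cases j <;> simp [Matrix.diagonal_apply]
  rw [hexpD] at hexp
  have hrow : ∀ i, rowSum0 b t i = ((U * !![e1, 0; 0, e2] * V) *ᵥ ![1, 1]) i := by
    intro i; rw [rowSum0, hexp]
  have h0 : rowSum0 b t 0 = (s + b 1 1 - b 0 0 - 2 * b 0 1) / (2 * s) * e1
      + (s + b 0 0 - b 1 1 + 2 * b 0 1) / (2 * s) * e2 := by
    rw [hrow 0, hU, hV]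
    simp [Matrix.mulVec_mulVec, Matrix.mulVec, Matrix.mul_apply, dotProduct,
      Fin.sum_univ_two]
    field_simp
    ring1
  have h1 : rowSum0 b t 1 = (s + b 0 0 - b 1 1 - 2 * b 1 0) / (2 * s) * e1
      + (s + b 1 1 - b 0 0 + 2 * b 1 0) / (2 * s) * e2 := by
    rw [hrow 1, hU, hV]
    simp [Matrix.mulVec_mulVec, Matrix.mulVec, Matrix.mul_apply, dotProduct,
      Fin.sum_univ_two]
    field_simp
    first
      | ring1
      | linear_combination (2 * s * (e1 - e2)) * hpq
      | linear_combination (2 * s * (e2 - e1)) * hpq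
      | linear_combination (s * (e1 - e2)) * hpq
      | linear_combination (s * (e2 - e1)) * hpq
      | linear_combination (4 * s * (e1 - e2)) * hpq
      | linear_combination (4 * s * (e2 - e1)) * hpq
      | linear_combination (4 * b 0 1 * s * (e1 - e2)) * hpq
      | linear_combination (4 * b 0 1 * s * (e2 - e1)) * hpq
      | linear_combination (2 * (e2 - e1)) * hpq
  constructor
  · rw [h0, hθ₂₁']
    have hc2 : (s + b 0 0 - b 1 1 + 2 * b 0 1) / (2 * s) ≤ 1 := by
      rw [div_le_one (by positivity)]
      linarith
    nlinarith [he2pos, he1pos]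
  · rw [h1, hθ₂₂']
    have hone : (1 : ℝ) - (s + b 0 0 - b 1 1 - 2 * b 1 0) / (2 * s)
        = (s + b 1 1 - b 0 0 + 2 * b 1 0) / (2 * s) := by
      field_simp
      ring
    rw [hone]
end

section
/- Let b = (b_ij) be a real 2×2 matrix with b12 < 0, b21 < 0 (so that Δ := (b22 − b11)² + 4·b12·b21 > 0), set λ1 = (−b11 − b22 + √Δ)/2 and ε := √Δ + b22 − b11 + 2·b21, and suppose ε = 0. Then for all t ≥ 0 the row sums of exp(−t·b) satisfy π'₁(0,t) = π'₂(0,t) = e^{λ1 t}. -/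
open Matrix Real

lemma exp_mulVec_eigen (M : Matrix (Fin 2) (Fin 2) ℝ) (v : Fin 2 → ℝ) (c : ℝ)
    (h : M *ᵥ v = c • v) :
    NormedSpace.exp M *ᵥ v = Real.exp c • v := by
  letI : SeminormedRing (Matrix (Fin 2) (Fin 2) ℝ) := Matrix.linftyOpSemiNormedRing
  letI : NormedRing (Matrix (Fin 2) (Fin 2) ℝ) := Matrix.linftyOpNormedRing
  letI : NormedAlgebra ℝ (Matrix (Fin 2) (Fin 2) ℝ) := Matrix.linftyOpNormedAlgebra
  have hpow : ∀ n : ℕ, M ^ n *ᵥ v = c ^ n • v := by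
    intro n
    induction n with
    | zero => simp
    | succ n ih =>
      rw [pow_succ, ← Matrix.mulVec_mulVec, h, Matrix.mulVec_smul, ih, smul_smul]
      ring_nf
  set L : Matrix (Fin 2) (Fin 2) ℝ →L[ℝ] (Fin 2 → ℝ) :=
    LinearMap.toContinuousLinearMap
      { toFun := fun A => A *ᵥ v
        map_add' := fun A B => Matrix.add_mulVec A B v
        map_smul' := fun r A => Matrix.smul_mulVec r A v } with hL
  have hsum : Summable fun n : ℕ => (n.factorial : ℝ)⁻¹ • M ^ n :=
    NormedSpace.expSeries_summable' M
  have : NormedSpace.exp M *ᵥ v = L (NormedSpace.exp M) := rfl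
  rw [this, NormedSpace.exp_eq_tsum ℝ, L.map_tsum hsum]
  have : ∀ n : ℕ, L ((n.factorial : ℝ)⁻¹ • M ^ n) = ((n.factorial : ℝ)⁻¹ * c ^ n) • v := by
    intro n
    rw [_root_.map_smul]
    show (n.factorial : ℝ)⁻¹ • (M ^ n *ᵥ v) = _
    rw [hpow, smul_smul]
  have hsc : Summable fun n : ℕ => (n.factorial : ℝ)⁻¹ * c ^ n :=
    (NormedSpace.expSeries_summable' (𝕂 := ℝ) c).congr fun n => smul_eq_mul ..
  rw [tsum_congr this, hsc.tsum_smul_const]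
  congr 1
  have := NormedSpace.exp_eq_tsum (𝕂 := ℝ) (𝔸 := ℝ)
  rw [Real.exp_eq_exp_ℝ, this]
  simp [smul_eq_mul]
/-- If `b12 < 0`, `b21 < 0` (so `Δ = (b22 − b11)² + 4 b12 b21 > 0`) and
`ε = √Δ + b22 − b11 + 2 b21 = 0`, then both row sums of `exp(−t·b)` are equal to
`e^{λ1 t}` with `λ1 = (−b11 − b22 + √Δ)/2`, for all `t ≥ 0`. -/
theorem stmt6 (b : Matrix (Fin 2) (Fin 2) ℝ)
    (hb12 : b 0 1 < 0) (hb21 : b 1 0 < 0)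
    (Δ : ℝ) (hΔdef : Δ = (b 1 1 - b 0 0) ^ 2 + 4 * b 0 1 * b 1 0) (hΔ : 0 < Δ)
    (lam1 eps : ℝ)
    (hlam1 : lam1 = (-(b 0 0) - b 1 1 + Real.sqrt Δ) / 2)
    (heps : eps = Real.sqrt Δ + b 1 1 - b 0 0 + 2 * b 1 0)
    (hepszero : eps = 0) :
    ∀ t : ℝ, 0 ≤ t →
      rowSum0 b t 0 = Real.exp (lam1 * t) ∧ rowSum0 b t 1 = Real.exp (lam1 * t) := by
  intro t ht
  have hs : Real.sqrt Δ = b 0 0 - b 1 1 - 2 * b 1 0 := by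
    rw [heps] at hepszero; linarith
  have hs2 : Real.sqrt Δ ^ 2 = Δ := Real.sq_sqrt hΔ.le
  rw [hs, hΔdef] at hs2
  have key : 4 * b 1 0 * b 0 1 = 4 * b 1 0 * (b 1 1 - b 0 0 + b 1 0) := by nlinarith [hs2]
  have hb01 : b 0 1 = b 1 1 - b 0 0 + b 1 0 :=
    mul_left_cancel₀ (by nlinarith : (4 * b 1 0 : ℝ) ≠ 0) key
  have heig : b *ᵥ ![1, 1] = (b 1 1 + b 1 0) • ![1, 1] := by
    funext i
    fin_cases i <;>
      simp [Matrix.mulVec, dotProduct, Fin.sum_univ_two, hb01] <;> ring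
  have heig' : ((-t) • b) *ᵥ ![1, 1] = (lam1 * t) • ![1, 1] := by
    rw [Matrix.smul_mulVec, heig, smul_smul]
    congr 1
    rw [hlam1, hs]; ring
  have hexp := exp_mulVec_eigen ((-t) • b) ![1, 1] (lam1 * t) heig'
  simp only [neg_smul] at hexp
  constructor <;> simp [rowSum0, hexp]
end

section
/- Let t ∈ ℝ, r0 ≤ t, and let ξ : [r0, t] → ℝ be measurable and bounded. Let φ1, φ2 : ℝ₊ → ℝ be locally Lipschitz functions with φ1(z) ≥ φ2(z) for all z ≥ 0, and let λ1 ≤ λ2 be nonnegative reals. Suppose v1, v2 : [r0, t] → ℝ₊ are continuous and satisfy v_i(r) = λ_i − ∫_r^t e^{ξ(s)}·φ_i(e^{−ξ(s)}·v_i(s)) ds for all r ∈ [r0, t] and i = 1, 2. Then v1(r) ≤ v2(r) for every r ∈ [r0, t]. -/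
open MeasureTheory Real

/-- Comparison theorem for backward Volterra integral equations: if `φ1 ≥ φ2` on `ℝ₊`
(both locally Lipschitz on `ℝ₊`), `0 ≤ λ1 ≤ λ2`, `ξ` is measurable and bounded on
`[r0, t]`, and `v1, v2 : [r0, t] → ℝ₊` are continuous solutions of
`v_i(r) = λ_i − ∫_r^t e^{ξ(s)} φ_i(e^{−ξ(s)} v_i(s)) ds`, then `v1 ≤ v2` on `[r0, t]`. -/
theorem stmt12 (t r0 : ℝ) (hr0 : r0 ≤ t)
    (ξ : ℝ → ℝ) (hξmeas : Measurable ξ)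
    (hξbdd : ∃ C : ℝ, ∀ s ∈ Set.Icc r0 t, |ξ s| ≤ C)
    (φ1 φ2 : ℝ → ℝ)
    (hφ1lip : ∀ M : ℝ, 0 < M → ∃ K : NNReal, LipschitzOnWith K φ1 (Set.Icc 0 M))
    (hφ2lip : ∀ M : ℝ, 0 < M → ∃ K : NNReal, LipschitzOnWith K φ2 (Set.Icc 0 M))
    (hφ : ∀ z : ℝ, 0 ≤ z → φ2 z ≤ φ1 z)
    (lam1 lam2 : ℝ) (hlam1 : 0 ≤ lam1) (hlam : lam1 ≤ lam2)
    (v1 v2 : ℝ → ℝ)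
    (hv1cont : ContinuousOn v1 (Set.Icc r0 t))
    (hv2cont : ContinuousOn v2 (Set.Icc r0 t))
    (hv1pos : ∀ r ∈ Set.Icc r0 t, 0 ≤ v1 r)
    (hv2pos : ∀ r ∈ Set.Icc r0 t, 0 ≤ v2 r)
    (hv1eq : ∀ r ∈ Set.Icc r0 t,
      v1 r = lam1 - ∫ s in r..t, Real.exp (ξ s) * φ1 (Real.exp (-ξ s) * v1 s))
    (hv2eq : ∀ r ∈ Set.Icc r0 t,
      v2 r = lam2 - ∫ s in r..t, Real.exp (ξ s) * φ2 (Real.exp (-ξ s) * v2 s)) :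
    ∀ r ∈ Set.Icc r0 t, v1 r ≤ v2 r := by
  obtain ⟨C, hC⟩ := hξbdd
  have ht0 : t ∈ Set.Icc r0 t := ⟨hr0, le_refl t⟩
  have hr00 : r0 ∈ Set.Icc r0 t := ⟨le_refl r0, hr0⟩
  have hC0 : 0 ≤ C := le_trans (abs_nonneg _) (hC r0 hr00)
  obtain ⟨B1, hB1⟩ := (isCompact_Icc).exists_bound_of_continuousOn hv1cont
  obtain ⟨B2, hB2⟩ := (isCompact_Icc).exists_bound_of_continuousOn hv2cont
  have hB10 : 0 ≤ B1 := le_trans (norm_nonneg _) (hB1 r0 hr00)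
  set Bv : ℝ := max B1 B2 with hBvdef
  have hBv0 : 0 ≤ Bv := le_trans hB10 (le_max_left _ _)
  set M : ℝ := Real.exp C * Bv + 1 with hMdef
  have hM0 : 0 < M := by positivity
  obtain ⟨K1, hK1⟩ := hφ1lip M hM0
  obtain ⟨K2, hK2⟩ := hφ2lip M hM0
  set K : ℝ := (K1 : ℝ) with hKdef
  have hK0 : 0 ≤ K := K1.coe_nonneg
  set a1 : ℝ → ℝ := fun s => Real.exp (-ξ s) * v1 s with ha1def
  set a2 : ℝ → ℝ := fun s => Real.exp (-ξ s) * v2 s with ha2def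
  have hamem : ∀ (v : ℝ → ℝ), (∀ s ∈ Set.Icc r0 t, 0 ≤ v s) →
      (∀ s ∈ Set.Icc r0 t, ‖v s‖ ≤ Bv) →
      ∀ s ∈ Set.Icc r0 t, Real.exp (-ξ s) * v s ∈ Set.Icc 0 M := by
    intro v hvpos hvB s hs
    constructor
    · exact mul_nonneg (Real.exp_pos _).le (hvpos s hs)
    · have h1 : Real.exp (-ξ s) ≤ Real.exp C :=
        Real.exp_le_exp.mpr (le_trans (neg_le_abs _) (hC s hs))
      have h2 : v s ≤ Bv := le_trans (le_abs_self _) (hvB s hs)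
      have := mul_le_mul h1 h2 (hvpos s hs) (Real.exp_pos C).le
      calc Real.exp (-ξ s) * v s ≤ Real.exp C * Bv := this
        _ ≤ M := by rw [hMdef]; linarith
  have ha1mem : ∀ s ∈ Set.Icc r0 t, a1 s ∈ Set.Icc 0 M :=
    hamem v1 hv1pos (fun s hs => le_trans (hB1 s hs) (le_max_left _ _))
  have ha2mem : ∀ s ∈ Set.Icc r0 t, a2 s ∈ Set.Icc 0 M :=
    hamem v2 hv2pos (fun s hs => le_trans (hB2 s hs) (le_max_right _ _))
  set g1 : ℝ → ℝ := fun s => Real.exp (ξ s) * φ1 (a1 s) with hg1def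
  set g2 : ℝ → ℝ := fun s => Real.exp (ξ s) * φ2 (a2 s) with hg2def
  -- integrability of g1, g2 on Icc r0 t
  have hgint : ∀ (φ : ℝ → ℝ) (Kφ : NNReal), LipschitzOnWith Kφ φ (Set.Icc 0 M) →
      ∀ (v : ℝ → ℝ), ContinuousOn v (Set.Icc r0 t) →
      (∀ s ∈ Set.Icc r0 t, Real.exp (-ξ s) * v s ∈ Set.Icc 0 M) →
      IntegrableOn (fun s => Real.exp (ξ s) * φ (Real.exp (-ξ s) * v s)) (Set.Icc r0 t) := by
    intro φ Kφ hlip v hvcont hmem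
    set p : ℝ → ℝ := fun z => max 0 (min z M) with hpdef
    have hpmem : ∀ z, p z ∈ Set.Icc 0 M :=
      fun z => ⟨le_max_left _ _, max_le hM0.le (min_le_right _ _)⟩
    have hφcont : Continuous (fun z => φ (p z)) :=
      hlip.continuousOn.comp_continuous
        (continuous_const.max (continuous_id.min continuous_const)) hpmem
    have haem : AEMeasurable (fun s => Real.exp (-ξ s) * v s)
        (volume.restrict (Set.Icc r0 t)) :=
      ((Real.measurable_exp.comp hξmeas.neg).aemeasurable).mul
        (hvcont.aemeasurable measurableSet_Icc)
    have hgm : AEStronglyMeasurable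
        (fun s => Real.exp (ξ s) * φ (p (Real.exp (-ξ s) * v s)))
        (volume.restrict (Set.Icc r0 t)) :=
      (((Real.measurable_exp.comp hξmeas).aemeasurable).mul
        (hφcont.measurable.comp_aemeasurable haem)).aestronglyMeasurable
    have hbd : ∀ s ∈ Set.Icc r0 t,
        ‖Real.exp (ξ s) * φ (p (Real.exp (-ξ s) * v s))‖
          ≤ Real.exp C * (|φ 0| + Kφ * M) := by
      intro s hs
      rw [norm_mul]
      have he : ‖Real.exp (ξ s)‖ ≤ Real.exp C := by
        rw [Real.norm_eq_abs, abs_of_pos (Real.exp_pos _)]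
        exact Real.exp_le_exp.mpr (le_trans (le_abs_self _) (hC s hs))
      have hφb : ‖φ (p (Real.exp (-ξ s) * v s))‖ ≤ |φ 0| + Kφ * M := by
        set z := p (Real.exp (-ξ s) * v s) with hz
        have hzmem : z ∈ Set.Icc 0 M := hpmem _
        have h0mem : (0 : ℝ) ∈ Set.Icc 0 M := ⟨le_refl _, hM0.le⟩
        have := hlip.dist_le_mul z hzmem 0 h0mem
        rw [Real.dist_eq, Real.dist_eq, sub_zero] at this
        have hzM : |z| ≤ M := by
          rw [abs_of_nonneg hzmem.1]; exact hzmem.2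
        rw [Real.norm_eq_abs]
        calc |φ z| ≤ |φ z - φ 0| + |φ 0| := by
              have := abs_sub_abs_le_abs_sub (φ z) (φ 0); linarith [abs_sub_le (φ z) (φ 0) 0]
          _ ≤ (Kφ : ℝ) * |z| + |φ 0| := by linarith
          _ ≤ |φ 0| + Kφ * M := by nlinarith [Kφ.coe_nonneg]
      exact mul_le_mul he hφb (norm_nonneg _) (Real.exp_pos C).le
    have hint' : IntegrableOn (fun s => Real.exp (ξ s) * φ (p (Real.exp (-ξ s) * v s)))
        (Set.Icc r0 t) := by
      refine Integrable.mono' (g := fun _ => Real.exp C * (|φ 0| + Kφ * M)) ?_ hgm ?_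
      · exact integrableOn_const (isCompact_Icc.measure_lt_top.ne)
      · exact (ae_restrict_iff' measurableSet_Icc).mpr (.of_forall hbd)
    refine hint'.congr_fun ?_ measurableSet_Icc
    intro s hs
    have hm := hmem s hs
    have hpz : p (Real.exp (-ξ s) * v s) = Real.exp (-ξ s) * v s := by
      rw [hpdef]
      simp only
      rw [min_eq_left hm.2, max_eq_right hm.1]
    show Real.exp (ξ s) * φ (p (Real.exp (-ξ s) * v s)) = Real.exp (ξ s) * φ (Real.exp (-ξ s) * v s)
    rw [hpz]
  have hg1int : IntegrableOn g1 (Set.Icc r0 t) := hgint φ1 K1 hK1 v1 hv1cont ha1mem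
  have hg2int : IntegrableOn g2 (Set.Icc r0 t) := hgint φ2 K2 hK2 v2 hv2cont ha2mem
  have hII : ∀ {f : ℝ → ℝ}, IntegrableOn f (Set.Icc r0 t) →
      ∀ a b, a ∈ Set.Icc r0 t → b ∈ Set.Icc r0 t → IntervalIntegrable f volume a b := by
    intro f hf a b ha hb
    refine (hf.mono_set ?_).intervalIntegrable
    rw [← Set.uIcc_of_le hr0]
    exact Set.uIcc_subset_uIcc (by rw [Set.uIcc_of_le hr0]; exact ha)
      (by rw [Set.uIcc_of_le hr0]; exact hb)
  set w : ℝ → ℝ := fun s => v1 s - v2 s with hwdef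
  set u : ℝ → ℝ := fun s => max (w s) 0 with hudef
  have hwcont : ContinuousOn w (Set.Icc r0 t) := hv1cont.sub hv2cont
  have hucont : ContinuousOn u (Set.Icc r0 t) := hwcont.sup continuousOn_const
  have hu0 : ∀ s, 0 ≤ u s := fun s => le_max_right _ _
  have huB : ∀ s ∈ Set.Icc r0 t, u s ≤ B1 := by
    intro s hs
    have h1 : w s ≤ B1 := by
      have := hv2pos s hs
      have h2 : v1 s ≤ B1 := le_trans (le_abs_self _) (hB1 s hs)
      rw [hwdef]; simp only; linarith
    exact max_le h1 hB10
  have huII : ∀ a b, a ∈ Set.Icc r0 t → b ∈ Set.Icc r0 t →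
      IntervalIntegrable u volume a b := by
    intro a b ha hb
    refine (hucont.mono ?_).intervalIntegrable
    rw [← Set.uIcc_of_le hr0]
    exact Set.uIcc_subset_uIcc (by rw [Set.uIcc_of_le hr0]; exact ha)
      (by rw [Set.uIcc_of_le hr0]; exact hb)
  -- Key inequality
  have key : ∀ r ∈ Set.Icc r0 t, w r ≤ K * ∫ s in r..t, u s := by
    intro r hr
    have hIu : 0 ≤ ∫ s in r..t, u s :=
      intervalIntegral.integral_nonneg hr.2 (fun s _ => hu0 s)
    rcases le_or_gt (v1 r) (v2 r) with hle | hlt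
    · have : w r ≤ 0 := by rw [hwdef]; simp only; linarith
      nlinarith
    · have hwr : 0 < w r := by rw [hwdef]; simp only; linarith
      set S : Set ℝ := {s ∈ Set.Icc r t | w s ≤ 0} with hSdef
      have htS : t ∈ S := by
        refine ⟨⟨hr.2, le_refl t⟩, ?_⟩
        have h1 := hv1eq t ht0
        have h2 := hv2eq t ht0
        rw [intervalIntegral.integral_same] at h1 h2
        rw [hwdef]; simp only; rw [h1, h2]; linarith
      have hSclosed : IsClosed S := by
        have : S = Set.Icc r t ∩ w ⁻¹' Set.Iic 0 := by
          ext s; simp [hSdef, Set.mem_sep_iff]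
        rw [this]
        exact (hwcont.mono (Set.Icc_subset_Icc_left hr.1)).preimage_isClosed_of_isClosed
          isClosed_Icc isClosed_Iic
      have hSbdd : BddBelow S := ⟨r, fun x hx => hx.1.1⟩
      set r2 : ℝ := sInf S with hr2def
      have hr2S : r2 ∈ S := hSclosed.csInf_mem ⟨t, htS⟩ hSbdd
      have hr2 : r2 ∈ Set.Icc r t := hr2S.1
      have hwr2 : w r2 ≤ 0 := hr2S.2
      have hrr2 : r < r2 := by
        rcases lt_or_eq_of_le hr2.1 with h | h
        · exact h
        · exfalso; rw [← h] at hwr2; linarith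
      have hr2mem : r2 ∈ Set.Icc r0 t := ⟨hr.1.trans hr2.1, hr2.2⟩
      have hpos : ∀ s ∈ Set.Ico r r2, 0 ≤ w s := by
        intro s hs
        by_contra hneg
        push_neg at hneg
        have hsS : s ∈ S := ⟨⟨hs.1, hs.2.le.trans hr2.2⟩, hneg.le⟩
        exact absurd (csInf_le hSbdd hsS) (not_le.mpr hs.2)
      -- integral identities
      have hadd1 : (∫ s in r..r2, g1 s) + ∫ s in r2..t, g1 s = ∫ s in r..t, g1 s :=
        intervalIntegral.integral_add_adjacent_intervals
          (hII hg1int r r2 hr hr2mem) (hII hg1int r2 t hr2mem ht0)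
      have hadd2 : (∫ s in r..r2, g2 s) + ∫ s in r2..t, g2 s = ∫ s in r..t, g2 s :=
        intervalIntegral.integral_add_adjacent_intervals
          (hII hg2int r r2 hr hr2mem) (hII hg2int r2 t hr2mem ht0)
      have e1 : v1 r - v1 r2 = -(∫ s in r..r2, g1 s) := by
        have h1 := hv1eq r hr
        have h2 := hv1eq r2 hr2mem
        rw [h1, h2]; linarith
      have e2 : v2 r - v2 r2 = -(∫ s in r..r2, g2 s) := by
        have h1 := hv2eq r hr
        have h2 := hv2eq r2 hr2mem
        rw [h1, h2]; linarith
      have ew : w r = w r2 + ∫ s in r..r2, (g2 s - g1 s) := by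
        rw [intervalIntegral.integral_sub (hII hg2int r r2 hr hr2mem)
          (hII hg1int r r2 hr hr2mem)]
        rw [hwdef]; simp only; linarith
      -- pointwise bound on [r, r2)
      have hptwise : ∀ s ∈ Set.Ico r r2, g2 s - g1 s ≤ K * u s := by
        intro s hs
        have hsIcc : s ∈ Set.Icc r0 t := ⟨hr.1.trans hs.1, hs.2.le.trans hr2.2⟩
        have hws : 0 ≤ w s := hpos s hs
        have hws' : 0 ≤ v1 s - v2 s := hws
        have h1 : φ2 (a2 s) ≤ φ1 (a2 s) :=
          hφ _ (mul_nonneg (Real.exp_pos _).le (hv2pos s hsIcc))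
        have h2 : φ1 (a2 s) - φ1 (a1 s) ≤ K * |a2 s - a1 s| := by
          have hd := hK1.dist_le_mul (a2 s) (ha2mem s hsIcc) (a1 s) (ha1mem s hsIcc)
          rw [Real.dist_eq, Real.dist_eq] at hd
          calc φ1 (a2 s) - φ1 (a1 s) ≤ |φ1 (a2 s) - φ1 (a1 s)| := le_abs_self _
            _ ≤ K * |a2 s - a1 s| := hd
        have h3 : |a2 s - a1 s| = Real.exp (-ξ s) * (v1 s - v2 s) := by
          have hh : a2 s - a1 s = Real.exp (-ξ s) * (v2 s - v1 s) := by
            rw [ha1def, ha2def]; ring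
          rw [hh, abs_mul, abs_of_pos (Real.exp_pos _), abs_of_nonpos (by linarith)]
          ring
        have hexp : Real.exp (ξ s) * Real.exp (-ξ s) = 1 := by
          rw [← Real.exp_add]; simp
        have husw : v1 s - v2 s ≤ u s := le_max_left _ _
        have hstep : φ2 (a2 s) - φ1 (a1 s) ≤ K * (Real.exp (-ξ s) * (v1 s - v2 s)) := by
          rw [← h3]; linarith
        calc g2 s - g1 s = Real.exp (ξ s) * (φ2 (a2 s) - φ1 (a1 s)) := by
              rw [hg1def, hg2def]; ring
          _ ≤ Real.exp (ξ s) * (K * (Real.exp (-ξ s) * (v1 s - v2 s))) :=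
              mul_le_mul_of_nonneg_left hstep (Real.exp_pos _).le
          _ = (Real.exp (ξ s) * Real.exp (-ξ s)) * (K * (v1 s - v2 s)) := by ring
          _ = K * (v1 s - v2 s) := by rw [hexp, one_mul]
          _ ≤ K * u s := mul_le_mul_of_nonneg_left husw hK0
      have hae : (fun s => g2 s - g1 s) ≤ᵐ[volume.restrict (Set.Icc r r2)]
          fun s => K * u s := by
        have hne : ∀ᵐ s ∂(volume.restrict (Set.Icc r r2)), s ≠ r2 := by
          refine ae_restrict_of_ae ?_
          have : volume ({r2} : Set ℝ) = 0 := Real.volume_singleton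
          have h := measure_eq_zero_iff_ae_notMem.mp this
          filter_upwards [h] with s hs
          simpa using hs
        filter_upwards [hne, ae_restrict_mem measurableSet_Icc] with s hne' hmem'
        exact hptwise s ⟨hmem'.1, lt_of_le_of_ne hmem'.2 hne'⟩
      have hIr2 : (∫ s in r..r2, (g2 s - g1 s)) ≤ ∫ s in r..r2, K * u s :=
        intervalIntegral.integral_mono_ae_restrict hrr2.le
          ((hII hg2int r r2 hr hr2mem).sub (hII hg1int r r2 hr hr2mem))
          ((huII r r2 hr hr2mem).const_mul K) hae
      have haddu : (∫ s in r..r2, K * u s) + ∫ s in r2..t, K * u s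
          = ∫ s in r..t, K * u s :=
        intervalIntegral.integral_add_adjacent_intervals
          ((huII r r2 hr hr2mem).const_mul K) ((huII r2 t hr2mem ht0).const_mul K)
      have htail : 0 ≤ ∫ s in r2..t, K * u s :=
        intervalIntegral.integral_nonneg hr2.2
          (fun s _ => mul_nonneg hK0 (hu0 s))
      have hconst : (∫ s in r..t, K * u s) = K * ∫ s in r..t, u s :=
        intervalIntegral.integral_const_mul K u
      linarith
  -- Iteration: u r ≤ B1 * (K * (t - r))^n / n!
  have bound : ∀ n : ℕ, ∀ r ∈ Set.Icc r0 t,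
      u r ≤ B1 * (K * (t - r)) ^ n / n.factorial := by
    intro n
    induction n with
    | zero => intro r hr; simpa using huB r hr
    | succ n ih =>
      intro r hr
      have hcont2 : Continuous fun s : ℝ => B1 * (K * (t - s)) ^ n / n.factorial :=
        ((continuous_const.mul ((continuous_const.mul (continuous_const.sub continuous_id)).pow n)).div_const _)
      have hIle : (∫ s in r..t, u s)
          ≤ ∫ s in r..t, B1 * (K * (t - s)) ^ n / n.factorial := by
        refine intervalIntegral.integral_mono_on hr.2 (huII r t hr ht0)
          (hcont2.intervalIntegrable r t) ?_
        intro s hs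
        exact ih s ⟨hr.1.trans hs.1, hs.2⟩
      have hpowint : (∫ s in r..t, (t - s) ^ n) = (t - r) ^ (n + 1) / (n + 1) := by
        have h := intervalIntegral.integral_comp_sub_left (a := r) (b := t)
          (fun x => x ^ n) t
        rw [sub_self] at h
        rw [h, integral_pow]
        simp
      have hcalc : (∫ s in r..t, B1 * (K * (t - s)) ^ n / n.factorial)
          = B1 * K ^ n / n.factorial * ((t - r) ^ (n + 1) / (n + 1)) := by
        have : (fun s => B1 * (K * (t - s)) ^ n / n.factorial)
            = fun s => (B1 * K ^ n / n.factorial) * (t - s) ^ n := by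
          funext s; rw [mul_pow]; ring
        rw [this, intervalIntegral.integral_const_mul, hpowint]
      have hfac : ((n + 1).factorial : ℝ) = (n + 1) * n.factorial := by
        rw [Nat.factorial_succ]; push_cast; ring
      have hfacpos : (0:ℝ) < n.factorial := by positivity
      have hn1pos : (0:ℝ) < n + 1 := by positivity
      have hkey2 : u r ≤ K * ∫ s in r..t, u s := by
        have hk := key r hr
        have hIu : 0 ≤ ∫ s in r..t, u s :=
          intervalIntegral.integral_nonneg hr.2 (fun s _ => hu0 s)
        exact max_le hk (mul_nonneg hK0 hIu)
      calc u r ≤ K * ∫ s in r..t, u s := hkey2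
        _ ≤ K * (B1 * K ^ n / n.factorial * ((t - r) ^ (n + 1) / (n + 1))) := by
            rw [← hcalc]; exact mul_le_mul_of_nonneg_left hIle hK0
        _ = B1 * (K * (t - r)) ^ (n + 1) / (n + 1).factorial := by
            rw [mul_pow, hfac]
            field_simp
            ring
  -- conclude
  intro r hr
  have h1 : ∀ n : ℕ, u r ≤ B1 * ((K * (t - r)) ^ n / n.factorial) := by
    intro n
    have := bound n r hr
    rw [mul_div_assoc] at this
    exact this
  have h2 : Filter.Tendsto (fun n : ℕ => B1 * ((K * (t - r)) ^ n / n.factorial))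
      Filter.atTop (nhds 0) := by
    have := (FloorSemiring.tendsto_pow_div_factorial_atTop (K * (t - r))).const_mul B1
    simpa using this
  have hu0' : u r ≤ 0 := ge_of_tendsto' h2 (fun n => h1 n)
  have : w r ≤ u r := le_max_left _ _
  have hw : w r ≤ 0 := le_trans this hu0'
  rw [hwdef] at hw
  simpa using sub_nonpos.mp hw
end

section
/- Let b = (b_ij) be a real 2×2 matrix, c1, c2 ≥ 0, and m1, m2 σ-finite measures on ℝ₊² supported by ℝ₊² \ {0} with ∫(z1 ∧ z1² + z2) m1(dz) + ∫(z2 ∧ z2² + z1) m2(dz) < ∞, satisfying b12 + ∫ z2 m1(dz) ≤ 0 and b21 + ∫ z1 m2(dz) ≤ 0. Define φ = (φ1, φ2) by φ1(λ) = b11 λ1 + b12 λ2 + c1 λ1² + ∫(e^{−⟨λ,z⟩} − 1 + ⟨λ,z⟩) m1(dz), φ2(λ) = b21 λ1 + b22 λ2 + c2 λ2² + ∫(e^{−⟨λ,z⟩} − 1 + ⟨λ,z⟩) m2(dz), and φ̃ = (φ̃1, φ̃2) by φ̃1(λ) = b11 λ1 + b12 λ2 + c1 λ1² + ∫(e^{−z1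 λ1} − 1 + z1 λ1) m1(dz), φ̃2(λ) = b21 λ1 + b22 λ2 + c2 λ2² + ∫(e^{−z2 λ2} − 1 + z2 λ2) m2(dz). Let r0 ≤ t, let ξ : [r0, t] → ℝ be measurable and bounded, fix λ ∈ ℝ₊², and suppose u, Ũ : [r0, t] → ℝ₊² are continuous and satisfy u^{(i)}(r) = λ_i − ∫_r^t e^{ξ(s)} φ_i(e^{−ξ(s)} u(s)) ds and Ũ^{(i)}(r) = λ_i − ∫_r^t e^{ξ(s)} φ̃_i(e^{−ξ(s)} Ũ(s)) ds for i = 1, 2 and all r ∈ [r0, t]. Then u^{(i)}(r) ≤ Ũ^{(i)}(r) for i = 1, 2 and all r ∈ [r0, t]. -/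
open MeasureTheory Real

/-- The closed first quadrant of `ℝ²`. -/
def quadrant : Set (ℝ × ℝ) := {p | 0 ≤ p.1 ∧ 0 ≤ p.2}

/-- First component of the two-type branching mechanism `φ`. -/
noncomputable def phi1 (b : Matrix (Fin 2) (Fin 2) ℝ) (c1 : ℝ) (m1 : Measure (ℝ × ℝ))
    (l : ℝ × ℝ) : ℝ :=
  b 0 0 * l.1 + b 0 1 * l.2 + c1 * l.1 ^ 2
    + ∫ z, (Real.exp (-(l.1 * z.1 + l.2 * z.2)) - 1 + (l.1 * z.1 + l.2 * z.2)) ∂m1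

/-- Second component of the two-type branching mechanism `φ`. -/
noncomputable def phi2 (b : Matrix (Fin 2) (Fin 2) ℝ) (c2 : ℝ) (m2 : Measure (ℝ × ℝ))
    (l : ℝ × ℝ) : ℝ :=
  b 1 0 * l.1 + b 1 1 * l.2 + c2 * l.2 ^ 2
    + ∫ z, (Real.exp (-(l.1 * z.1 + l.2 * z.2)) - 1 + (l.1 * z.1 + l.2 * z.2)) ∂m2

/-- First component of the decoupled branching mechanism `φ̃`. -/
noncomputable def phiTilde1 (b : Matrix (Fin 2) (Fin 2) ℝ) (c1 : ℝ) (m1 : Measure (ℝ × ℝ))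
    (l : ℝ × ℝ) : ℝ :=
  b 0 0 * l.1 + b 0 1 * l.2 + c1 * l.1 ^ 2
    + ∫ z, (Real.exp (-(z.1 * l.1)) - 1 + z.1 * l.1) ∂m1

/-- Second component of the decoupled branching mechanism `φ̃`. -/
noncomputable def phiTilde2 (b : Matrix (Fin 2) (Fin 2) ℝ) (c2 : ℝ) (m2 : Measure (ℝ × ℝ))
    (l : ℝ × ℝ) : ℝ :=
  b 1 0 * l.1 + b 1 1 * l.2 + c2 * l.2 ^ 2
    + ∫ z, (Real.exp (-(z.2 * l.2)) - 1 + z.2 * l.2) ∂m2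

lemma exp_term_nonneg (x : ℝ) : 0 ≤ Real.exp (-x) - 1 + x := by
  nlinarith [Real.add_one_le_exp (-x)]

lemma exp_term_le_self {x : ℝ} (hx : 0 ≤ x) : Real.exp (-x) - 1 + x ≤ x := by
  have : Real.exp (-x) ≤ 1 := Real.exp_le_one_iff.2 (by linarith)
  linarith

lemma exp_term_le_sq {x : ℝ} (hx : 0 ≤ x) : Real.exp (-x) - 1 + x ≤ x ^ 2 := by
  have h1 : 1 + x ≤ Real.exp x := by nlinarith [Real.add_one_le_exp x]
  have h2 : Real.exp (-x) = (Real.exp x)⁻¹ := Real.exp_neg x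
  have h3 : 0 < Real.exp x := Real.exp_pos x
  have h4 : (Real.exp x)⁻¹ ≤ (1 + x)⁻¹ := by
    apply inv_anti₀ (by linarith) h1
  have h5 : (1 + x)⁻¹ ≤ 1 - x + x ^ 2 := by
    rw [inv_le_iff_one_le_mul₀ (by linarith)]
    nlinarith
  rw [h2]; linarith [h4.trans h5]

-- monotonicity of g(x) = exp(-x) + x on [0, ∞)
lemma exp_g_mono {x y : ℝ} (hx : 0 ≤ x) (hxy : x ≤ y) :
    Real.exp (-x) + x ≤ Real.exp (-y) + y := by
  have h1 : Real.exp (-x) ≤ 1 := Real.exp_le_one_iff.2 (by linarith)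
  have h2 : 1 - (y - x) ≤ Real.exp (-(y - x)) := by
    nlinarith [Real.add_one_le_exp (-(y-x))]
  have h3 : Real.exp (-y) = Real.exp (-x) * Real.exp (-(y - x)) := by
    rw [← Real.exp_add]; ring_nf
  nlinarith [Real.exp_pos (-x), Real.exp_pos (-(y-x))]

-- 1-Lipschitz upper bound for g
lemma exp_g_lip {x y : ℝ} (hxy : x ≤ y) :
    Real.exp (-y) + y - (Real.exp (-x) + x) ≤ y - x := by
  have : Real.exp (-y) ≤ Real.exp (-x) := Real.exp_le_exp.2 (by linarith)
  linarith

lemma master_bound {l1 l2 z1 z2 : ℝ} (hl1 : 0 ≤ l1) (hl2 : 0 ≤ l2) (hz1 : 0 ≤ z1)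
    (hz2 : 0 ≤ z2) :
    Real.exp (-(l1 * z1 + l2 * z2)) - 1 + (l1 * z1 + l2 * z2)
      ≤ (l1 ^ 2 + l1 + l2) * (min z1 (z1 ^ 2) + z2) := by
  have ha : 0 ≤ l1 * z1 := mul_nonneg hl1 hz1
  have hb : 0 ≤ l2 * z2 := mul_nonneg hl2 hz2
  have step : Real.exp (-(l1 * z1 + l2 * z2)) - 1 + (l1 * z1 + l2 * z2)
      ≤ (Real.exp (-(l1 * z1)) - 1 + l1 * z1) + l2 * z2 := by
    have : Real.exp (-(l1 * z1 + l2 * z2)) ≤ Real.exp (-(l1 * z1)) :=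
      Real.exp_le_exp.2 (by linarith)
    linarith
  rcases le_total z1 1 with h | h
  · have hmin : min z1 (z1 ^ 2) = z1 ^ 2 := min_eq_right (by nlinarith)
    have h2 : Real.exp (-(l1 * z1)) - 1 + l1 * z1 ≤ (l1 * z1) ^ 2 := exp_term_le_sq ha
    rw [hmin]
    have hz1sq : z1 ^ 2 ≤ z1 := by nlinarith
    nlinarith [sq_nonneg z1, mul_nonneg (mul_nonneg hl1 hl1) (sq_nonneg z1)]
  · have hmin : min z1 (z1 ^ 2) = z1 := min_eq_left (by nlinarith)
    have h2 : Real.exp (-(l1 * z1)) - 1 + l1 * z1 ≤ l1 * z1 := exp_term_le_self ha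
    rw [hmin]
    nlinarith [mul_nonneg (mul_nonneg hl1 hl1) hz1, mul_nonneg hl2 hz1]


lemma ae_quadrant {m : Measure (ℝ × ℝ)} (hsupp : m quadrantᶜ = 0) :
    ∀ᵐ z ∂m, 0 ≤ z.1 ∧ 0 ≤ z.2 := by
  have hset : {z : ℝ × ℝ | ¬(0 ≤ z.1 ∧ 0 ≤ z.2)} = quadrantᶜ := by
    ext z; simp [quadrant, Set.mem_compl_iff, Set.mem_setOf_eq]
  rw [MeasureTheory.ae_iff, hset]; exact hsupp

-- integrability of the moment function
lemma integrable_h {m : Measure (ℝ × ℝ)} (hsupp : m quadrantᶜ = 0)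
    (hmom : ∫⁻ z, ENNReal.ofReal (min z.1 (z.1 ^ 2) + z.2) ∂m < ⊤) :
    Integrable (fun z : ℝ × ℝ => min z.1 (z.1 ^ 2) + z.2) m := by
  have hae := ae_quadrant hsupp
  have hnn : 0 ≤ᵐ[m] fun z : ℝ × ℝ => min z.1 (z.1 ^ 2) + z.2 := by
    filter_upwards [hae] with z hz
    have := hz.1; have := hz.2
    have : (0:ℝ) ≤ min z.1 (z.1 ^ 2) := le_min hz.1 (sq_nonneg _)
    positivity
  refine ⟨?_, ?_⟩
  · exact ((continuous_fst.min (continuous_fst.pow 2)).add continuous_snd).aestronglyMeasurable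
  · rw [hasFiniteIntegral_iff_ofReal hnn]
    exact hmom

lemma integrable_exp_term {m : Measure (ℝ × ℝ)} (hsupp : m quadrantᶜ = 0)
    (hmom : ∫⁻ z, ENNReal.ofReal (min z.1 (z.1 ^ 2) + z.2) ∂m < ⊤)
    {a c : ℝ} (ha : 0 ≤ a) (hc : 0 ≤ c) :
    Integrable (fun z : ℝ × ℝ =>
      Real.exp (-(a * z.1 + c * z.2)) - 1 + (a * z.1 + c * z.2)) m := by
  have hae := ae_quadrant hsupp
  have hint := (integrable_h hsupp hmom).const_mul (a ^ 2 + a + c)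
  refine hint.mono' ?_ ?_
  · apply Continuous.aestronglyMeasurable
    have hcont : Continuous fun z : ℝ × ℝ => a * z.1 + c * z.2 :=
      (continuous_const.mul continuous_fst).add (continuous_const.mul continuous_snd)
    exact ((hcont.neg.rexp).sub continuous_const).add hcont
  · filter_upwards [hae] with z hz
    have h1 := exp_term_nonneg (a * z.1 + c * z.2)
    have h2 := master_bound ha hc hz.1 hz.2
    rw [Real.norm_eq_abs, abs_of_nonneg h1]
    exact h2

lemma integrable_coord2 {m : Measure (ℝ × ℝ)} (hsupp : m quadrantᶜ = 0)
    (hmom : ∫⁻ z, ENNReal.ofReal (min z.1 (z.1 ^ 2) + z.2) ∂m < ⊤) :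
    Integrable (fun z : ℝ × ℝ => z.2) m := by
  have hae := ae_quadrant hsupp
  refine (integrable_h hsupp hmom).mono' continuous_snd.aestronglyMeasurable ?_
  filter_upwards [hae] with z hz
  rw [Real.norm_eq_abs, abs_of_nonneg hz.2]
  have : (0:ℝ) ≤ min z.1 (z.1 ^ 2) := le_min hz.1 (sq_nonneg _)
  linarith

-- mirrored integrability lemmas (for m2)
lemma integrable_h2 {m : Measure (ℝ × ℝ)} (hsupp : m quadrantᶜ = 0)
    (hmom : ∫⁻ z, ENNReal.ofReal (min z.2 (z.2 ^ 2) + z.1) ∂m < ⊤) :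
    Integrable (fun z : ℝ × ℝ => min z.2 (z.2 ^ 2) + z.1) m := by
  have hae := ae_quadrant hsupp
  have hnn : 0 ≤ᵐ[m] fun z : ℝ × ℝ => min z.2 (z.2 ^ 2) + z.1 := by
    filter_upwards [hae] with z hz
    have : (0:ℝ) ≤ min z.2 (z.2 ^ 2) := le_min hz.2 (sq_nonneg _)
    simp only [Pi.zero_apply]
    linarith [hz.1]
  refine ⟨?_, ?_⟩
  · exact ((continuous_snd.min (continuous_snd.pow 2)).add continuous_fst).aestronglyMeasurable
  · rw [hasFiniteIntegral_iff_ofReal hnn]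
    exact hmom

lemma integrable_exp_term2 {m : Measure (ℝ × ℝ)} (hsupp : m quadrantᶜ = 0)
    (hmom : ∫⁻ z, ENNReal.ofReal (min z.2 (z.2 ^ 2) + z.1) ∂m < ⊤)
    {a c : ℝ} (ha : 0 ≤ a) (hc : 0 ≤ c) :
    Integrable (fun z : ℝ × ℝ =>
      Real.exp (-(a * z.1 + c * z.2)) - 1 + (a * z.1 + c * z.2)) m := by
  have hae := ae_quadrant hsupp
  have hint := (integrable_h2 hsupp hmom).const_mul (c ^ 2 + c + a)
  refine hint.mono' ?_ ?_
  · apply Continuous.aestronglyMeasurable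
    have hcont : Continuous fun z : ℝ × ℝ => a * z.1 + c * z.2 :=
      (continuous_const.mul continuous_fst).add (continuous_const.mul continuous_snd)
    exact ((hcont.neg.rexp).sub continuous_const).add hcont
  · filter_upwards [hae] with z hz
    have h1 := exp_term_nonneg (a * z.1 + c * z.2)
    have h2 := master_bound hc ha hz.2 hz.1
    rw [Real.norm_eq_abs, abs_of_nonneg h1]
    calc Real.exp (-(a * z.1 + c * z.2)) - 1 + (a * z.1 + c * z.2)
        = Real.exp (-(c * z.2 + a * z.1)) - 1 + (c * z.2 + a * z.1) := by ring_nf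
      _ ≤ (c ^ 2 + c + a) * (min z.2 (z.2 ^ 2) + z.1) := h2

lemma integrable_coord1 {m : Measure (ℝ × ℝ)} (hsupp : m quadrantᶜ = 0)
    (hmom : ∫⁻ z, ENNReal.ofReal (min z.2 (z.2 ^ 2) + z.1) ∂m < ⊤) :
    Integrable (fun z : ℝ × ℝ => z.1) m := by
  have hae := ae_quadrant hsupp
  refine (integrable_h2 hsupp hmom).mono' continuous_fst.aestronglyMeasurable ?_
  filter_upwards [hae] with z hz
  rw [Real.norm_eq_abs, abs_of_nonneg hz.1]
  have : (0:ℝ) ≤ min z.2 (z.2 ^ 2) := le_min hz.2 (sq_nonneg _)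
  linarith





/-- Core comparison for the first component. -/
lemma phi_comp1 (b : Matrix (Fin 2) (Fin 2) ℝ) (c1 : ℝ) (hc1 : 0 ≤ c1)
    (m : Measure (ℝ × ℝ)) (hsupp : m quadrantᶜ = 0)
    (hmom : ∫⁻ z, ENNReal.ofReal (min z.1 (z.1 ^ 2) + z.2) ∂m < ⊤)
    (hadm : b 0 1 + ∫ z, z.2 ∂m ≤ 0)
    {a c a' c' : ℝ} (ha' : 0 ≤ a') (haa : a' ≤ a) (hc' : 0 ≤ c') (hcc : 0 ≤ c) :
    phiTilde1 b c1 m (a', c') - phi1 b c1 m (a, c)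
      ≤ |b 0 0| * (a - a') + |b 0 1| * max (c - c') 0 := by
  have hae := ae_quadrant hsupp
  have ha : 0 ≤ a := ha'.trans haa
  have hz2int := integrable_coord2 hsupp hmom
  have hz2nn : 0 ≤ ∫ z, z.2 ∂m := integral_nonneg_of_ae (by
    filter_upwards [hae] with z hz; exact hz.2)
  have hb01 : b 0 1 ≤ 0 := by linarith
  -- integrands
  have intT : Integrable (fun z : ℝ × ℝ => Real.exp (-(z.1 * a')) - 1 + z.1 * a') m := by
    refine (integrable_exp_term hsupp hmom ha' le_rfl).congr ?_
    filter_upwards with z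
    ring_nf
  have intM : Integrable (fun z : ℝ × ℝ =>
      Real.exp (-(a * z.1 + c' * z.2)) - 1 + (a * z.1 + c' * z.2)) m :=
    integrable_exp_term hsupp hmom ha hc'
  have intE : Integrable (fun z : ℝ × ℝ =>
      Real.exp (-(a * z.1 + c * z.2)) - 1 + (a * z.1 + c * z.2)) m :=
    integrable_exp_term hsupp hmom ha hcc
  -- step 1 : tilde integral ≤ mid integral
  have hTM : (∫ z, (Real.exp (-(z.1 * a')) - 1 + z.1 * a') ∂m)
      ≤ ∫ z, (Real.exp (-(a * z.1 + c' * z.2)) - 1 + (a * z.1 + c' * z.2)) ∂m := by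
    refine integral_mono_ae intT intM ?_
    filter_upwards [hae] with z hz
    have hx : 0 ≤ z.1 * a' := mul_nonneg hz.1 ha'
    have hxy : z.1 * a' ≤ a * z.1 + c' * z.2 := by
      nlinarith [mul_nonneg hc' hz.2, mul_nonneg hz.1 (sub_nonneg.2 haa)]
    have := exp_g_mono hx hxy
    linarith
  have hb00 : b 0 0 * a' - b 0 0 * a ≤ |b 0 0| * (a - a') := by
    have h1 : b 0 0 * (a' - a) ≤ |b 0 0 * (a' - a)| := le_abs_self _
    rw [abs_mul] at h1
    have : |a' - a| = a - a' := by rw [abs_sub_comm, abs_of_nonneg (by linarith)]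
    nlinarith [abs_nonneg (b 0 0)]
  have hquad : c1 * a' ^ 2 - c1 * a ^ 2 ≤ 0 := by
    have hsq : a' ^ 2 ≤ a ^ 2 := by nlinarith
    nlinarith [mul_nonneg hc1 (sub_nonneg.2 hsq)]
  rcases le_total c' c with hcase | hcase
  · -- c' ≤ c : mid ≤ e, and b01-terms give exactly |b01| (c - c')
    have hME : (∫ z, (Real.exp (-(a * z.1 + c' * z.2)) - 1 + (a * z.1 + c' * z.2)) ∂m)
        ≤ ∫ z, (Real.exp (-(a * z.1 + c * z.2)) - 1 + (a * z.1 + c * z.2)) ∂m := by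
      refine integral_mono_ae intM intE ?_
      filter_upwards [hae] with z hz
      have hx : 0 ≤ a * z.1 + c' * z.2 :=
        add_nonneg (mul_nonneg ha hz.1) (mul_nonneg hc' hz.2)
      have hxy : a * z.1 + c' * z.2 ≤ a * z.1 + c * z.2 := by
        nlinarith [mul_nonneg (sub_nonneg.2 hcase) hz.2]
      have := exp_g_mono hx hxy
      linarith
    have hmax : max (c - c') 0 = c - c' := max_eq_left (by linarith)
    have hb01' : b 0 1 * c' - b 0 1 * c = |b 0 1| * (c - c') := by
      rw [abs_of_nonpos hb01]; ring
    simp only [phiTilde1, phi1]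
    rw [hmax]
    linarith
  · -- c < c' : use admissibility
    have hME : (∫ z, (Real.exp (-(a * z.1 + c' * z.2)) - 1 + (a * z.1 + c' * z.2)) ∂m)
        - (∫ z, (Real.exp (-(a * z.1 + c * z.2)) - 1 + (a * z.1 + c * z.2)) ∂m)
        ≤ (c' - c) * ∫ z, z.2 ∂m := by
      rw [← integral_sub intM intE, ← integral_const_mul]
      refine integral_mono_ae (intM.sub intE) (hz2int.const_mul _) ?_
      filter_upwards [hae] with z hz
      have hp : a * z.1 + c * z.2 ≤ a * z.1 + c' * z.2 := by
        nlinarith [mul_nonneg (sub_nonneg.2 hcase) hz.2]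
      have := exp_g_lip hp
      nlinarith
    have hadm' : (c' - c) * (b 0 1 + ∫ z, z.2 ∂m) ≤ 0 :=
      mul_nonpos_of_nonneg_of_nonpos (by linarith) hadm
    have hmax : (0:ℝ) ≤ |b 0 1| * max (c - c') 0 :=
      mul_nonneg (abs_nonneg _) (le_max_right _ _)
    simp only [phiTilde1, phi1]
    nlinarith

/-- Core comparison for the second component. -/
lemma phi_comp2 (b : Matrix (Fin 2) (Fin 2) ℝ) (c2 : ℝ) (hc2 : 0 ≤ c2)
    (m : Measure (ℝ × ℝ)) (hsupp : m quadrantᶜ = 0)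
    (hmom : ∫⁻ z, ENNReal.ofReal (min z.2 (z.2 ^ 2) + z.1) ∂m < ⊤)
    (hadm : b 1 0 + ∫ z, z.1 ∂m ≤ 0)
    {a c a' c' : ℝ} (hc' : 0 ≤ c') (hcc : c' ≤ c) (ha' : 0 ≤ a') (ha : 0 ≤ a) :
    phiTilde2 b c2 m (a', c') - phi2 b c2 m (a, c)
      ≤ |b 1 1| * (c - c') + |b 1 0| * max (a - a') 0 := by
  have hae := ae_quadrant hsupp
  have hc : 0 ≤ c := hc'.trans hcc
  have hz1int := integrable_coord1 hsupp hmom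
  have hz1nn : 0 ≤ ∫ z, z.1 ∂m := integral_nonneg_of_ae (by
    filter_upwards [hae] with z hz; exact hz.1)
  have hb10 : b 1 0 ≤ 0 := by linarith
  have intT : Integrable (fun z : ℝ × ℝ => Real.exp (-(z.2 * c')) - 1 + z.2 * c') m := by
    refine (integrable_exp_term2 hsupp hmom le_rfl hc').congr ?_
    filter_upwards with z
    ring_nf
  have intM : Integrable (fun z : ℝ × ℝ =>
      Real.exp (-(a' * z.1 + c * z.2)) - 1 + (a' * z.1 + c * z.2)) m :=
    integrable_exp_term2 hsupp hmom ha' hc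
  have intE : Integrable (fun z : ℝ × ℝ =>
      Real.exp (-(a * z.1 + c * z.2)) - 1 + (a * z.1 + c * z.2)) m :=
    integrable_exp_term2 hsupp hmom ha hc
  have hTM : (∫ z, (Real.exp (-(z.2 * c')) - 1 + z.2 * c') ∂m)
      ≤ ∫ z, (Real.exp (-(a' * z.1 + c * z.2)) - 1 + (a' * z.1 + c * z.2)) ∂m := by
    refine integral_mono_ae intT intM ?_
    filter_upwards [hae] with z hz
    have hx : 0 ≤ z.2 * c' := mul_nonneg hz.2 hc'
    have hxy : z.2 * c' ≤ a' * z.1 + c * z.2 := by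
      nlinarith [mul_nonneg ha' hz.1, mul_nonneg hz.2 (sub_nonneg.2 hcc)]
    have := exp_g_mono hx hxy
    linarith
  have hb11 : b 1 1 * c' - b 1 1 * c ≤ |b 1 1| * (c - c') := by
    have h1 : b 1 1 * (c' - c) ≤ |b 1 1 * (c' - c)| := le_abs_self _
    rw [abs_mul] at h1
    have : |c' - c| = c - c' := by rw [abs_sub_comm, abs_of_nonneg (by linarith)]
    nlinarith [abs_nonneg (b 1 1)]
  have hquad : c2 * c' ^ 2 - c2 * c ^ 2 ≤ 0 := by
    have hsq : c' ^ 2 ≤ c ^ 2 := by nlinarith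
    nlinarith [mul_nonneg hc2 (sub_nonneg.2 hsq)]
  rcases le_total a' a with hcase | hcase
  · have hME : (∫ z, (Real.exp (-(a' * z.1 + c * z.2)) - 1 + (a' * z.1 + c * z.2)) ∂m)
        ≤ ∫ z, (Real.exp (-(a * z.1 + c * z.2)) - 1 + (a * z.1 + c * z.2)) ∂m := by
      refine integral_mono_ae intM intE ?_
      filter_upwards [hae] with z hz
      have hx : 0 ≤ a' * z.1 + c * z.2 :=
        add_nonneg (mul_nonneg ha' hz.1) (mul_nonneg hc hz.2)
      have hxy : a' * z.1 + c * z.2 ≤ a * z.1 + c * z.2 := by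
        nlinarith [mul_nonneg (sub_nonneg.2 hcase) hz.1]
      have := exp_g_mono hx hxy
      linarith
    have hmax : max (a - a') 0 = a - a' := max_eq_left (by linarith)
    have hb10' : b 1 0 * a' - b 1 0 * a = |b 1 0| * (a - a') := by
      rw [abs_of_nonpos hb10]; ring
    simp only [phiTilde2, phi2]
    rw [hmax]
    linarith
  · have hME : (∫ z, (Real.exp (-(a' * z.1 + c * z.2)) - 1 + (a' * z.1 + c * z.2)) ∂m)
        - (∫ z, (Real.exp (-(a * z.1 + c * z.2)) - 1 + (a * z.1 + c * z.2)) ∂m)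
        ≤ (a' - a) * ∫ z, z.1 ∂m := by
      rw [← integral_sub intM intE, ← integral_const_mul]
      refine integral_mono_ae (intM.sub intE) (hz1int.const_mul _) ?_
      filter_upwards [hae] with z hz
      have hp : a * z.1 + c * z.2 ≤ a' * z.1 + c * z.2 := by
        nlinarith [mul_nonneg (sub_nonneg.2 hcase) hz.1]
      have := exp_g_lip hp
      nlinarith
    have hadm' : (a' - a) * (b 1 0 + ∫ z, z.1 ∂m) ≤ 0 :=
      mul_nonpos_of_nonneg_of_nonpos (by linarith) hadm
    have hmax : (0:ℝ) ≤ |b 1 0| * max (a - a') 0 :=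
      mul_nonneg (abs_nonneg _) (le_max_right _ _)
    simp only [phiTilde2, phi2]
    nlinarith

/-- If `g1` touches the barrier `ε e^{θ(t-·)}` at `r1` while both `g1, g2` are strictly
below it to the right, we get a contradiction. -/
lemma crossing (r0 t : ℝ) (hr0 : r0 ≤ t) (g1 g2 Q1 : ℝ → ℝ)
    (hg1c : ContinuousOn g1 (Set.Icc r0 t))
    (hInt1 : ∀ a b, a ∈ Set.Icc r0 t → b ∈ Set.Icc r0 t →
      IntervalIntegrable Q1 volume a b)
    (heq1 : ∀ r ∈ Set.Icc r0 t, g1 r = ∫ s in r..t, Q1 s)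
    (K ε θ : ℝ) (hK : 0 ≤ K) (hθ : θ = 8 * K + 1) (hε : 0 < ε)
    (hQ1 : ∀ s ∈ Set.Icc r0 t, 0 ≤ g1 s →
      Q1 s ≤ K * (max (g1 s) 0 + max (g2 s) 0))
    (r1 : ℝ) (hr1 : r1 ∈ Set.Icc r0 t) (hr1t : r1 < t)
    (hw1 : ε * Real.exp (θ * (t - r1)) ≤ g1 r1)
    (hlt : ∀ s, r1 < s → s ≤ t →
      g1 s < ε * Real.exp (θ * (t - s)) ∧ g2 s < ε * Real.exp (θ * (t - s))) :
    False := by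
  have hθpos : 0 < θ := by rw [hθ]; linarith
  set w : ℝ → ℝ := fun s => ε * Real.exp (θ * (t - s)) with hw
  have hwpos : ∀ s, 0 < w s := fun s => mul_pos hε (Real.exp_pos _)
  have hwcont : Continuous w := by
    apply continuous_const.mul
    exact Real.continuous_exp.comp (continuous_const.mul (continuous_const.sub continuous_id))
  have hg1t : g1 t = 0 := by
    rw [heq1 t ⟨hr0, le_rfl⟩, intervalIntegral.integral_same]
  -- stopping set
  set T : Set ℝ := Set.Icc r1 t ∩ {s | g1 s ≤ w s / 2} with hT
  have hsub : T ⊆ Set.Icc r1 t := Set.inter_subset_left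
  have hsub' : Set.Icc r1 t ⊆ Set.Icc r0 t := Set.Icc_subset_Icc_left hr1.1
  have hTne : T.Nonempty := ⟨t, ⟨le_of_lt hr1t, le_rfl⟩, by
    simp only [Set.mem_setOf_eq, hg1t]
    exact le_of_lt (half_pos (hwpos t))⟩
  have hTclosed : IsClosed T := by
    have hcont : ContinuousOn (fun s => g1 s - w s / 2) (Set.Icc r1 t) :=
      (hg1c.mono hsub').sub ((hwcont.continuousOn).div_const 2)
    have : T = Set.Icc r1 t ∩ (fun s => g1 s - w s / 2) ⁻¹' Set.Iic 0 := by
      ext s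
      simp [hT, Set.mem_setOf_eq, sub_nonpos]
    rw [this]
    exact hcont.preimage_isClosed_of_isClosed isClosed_Icc isClosed_Iic
  have hTcomp : IsCompact T := IsCompact.of_isClosed_subset isCompact_Icc hTclosed
    (hsub.trans hsub')
  set s2 := sInf T with hs2
  have hs2T : s2 ∈ T := hTcomp.sInf_mem hTne
  have hs2Icc : s2 ∈ Set.Icc r0 t := hsub' (hsub hs2T)
  have hr1s2 : r1 < s2 := by
    rcases lt_or_eq_of_le (hsub hs2T).1 with h | h
    · exact h
    · exfalso
      have h2 : g1 r1 ≤ w r1 / 2 := by rw [h]; exact hs2T.2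
      have h3 : w r1 = ε * Real.exp (θ * (t - r1)) := rfl
      have h4 : 0 < w r1 := hwpos r1
      rw [h3] at h2 h4
      linarith
  -- pointwise bound on the open interval
  have hbound : ∀ s ∈ Set.Ioo r1 s2, Q1 s ≤ 2 * K * w s := by
    intro s hs
    have hsIcc : s ∈ Set.Icc r0 t :=
      ⟨hr1.1.trans (le_of_lt hs.1), (le_of_lt hs.2).trans (hsub hs2T).2⟩
    have hsT : s ∉ T := notMem_of_lt_csInf hs.2 hTcomp.bddBelow
    have hsmem : s ∈ Set.Icc r1 t := ⟨le_of_lt hs.1, hsIcc.2⟩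
    have hghalf : w s / 2 < g1 s := by
      by_contra h
      exact hsT ⟨hsmem, le_of_not_gt h⟩
    have hg1pos : 0 ≤ g1 s := le_of_lt (lt_of_le_of_lt (le_of_lt (half_pos (hwpos s)))
      hghalf)
    have hlt' := hlt s hs.1 hsIcc.2
    have h1 : max (g1 s) 0 ≤ w s := max_le (le_of_lt hlt'.1) (le_of_lt (hwpos s))
    have h2 : max (g2 s) 0 ≤ w s := max_le (le_of_lt hlt'.2) (le_of_lt (hwpos s))
    calc Q1 s ≤ K * (max (g1 s) 0 + max (g2 s) 0) := hQ1 s hsIcc hg1pos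
      _ ≤ K * (w s + w s) := by
          apply mul_le_mul_of_nonneg_left _ hK
          linarith
      _ = 2 * K * w s := by ring
  -- integral comparison
  have hint12 := hInt1 r1 s2 hr1 hs2Icc
  have hint2t := hInt1 s2 t hs2Icc ⟨hr0, le_rfl⟩
  have hsplit : (∫ s in r1..s2, Q1 s) + (∫ s in s2..t, Q1 s) = ∫ s in r1..t, Q1 s :=
    intervalIntegral.integral_add_adjacent_intervals hint12 hint2t
  have hQval : (∫ s in r1..s2, Q1 s) = g1 r1 - g1 s2 := by
    rw [heq1 r1 hr1, heq1 s2 hs2Icc] at *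
    linarith [hsplit]
  have hwint : IntervalIntegrable (fun s => 2 * K * w s) volume r1 s2 :=
    ((continuous_const.mul hwcont)).intervalIntegrable r1 s2
  have hmono : (∫ s in r1..s2, Q1 s) ≤ ∫ s in r1..s2, 2 * K * w s := by
    refine intervalIntegral.integral_mono_ae_restrict (le_of_lt hr1s2) hint12 hwint ?_
    rw [Filter.EventuallyLE, ae_restrict_iff' measurableSet_Icc]
    rw [MeasureTheory.ae_iff]
    refine measure_mono_null (t := {r1} ∪ {s2}) ?_
      (measure_union_null Real.volume_singleton Real.volume_singleton)
    intro x hx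
    simp only [Set.mem_setOf_eq, Classical.not_imp] at hx
    obtain ⟨hxI, hxn⟩ := hx
    by_contra hmem
    simp only [Set.mem_union, Set.mem_singleton_iff] at hmem
    push_neg at hmem
    have hxIoo : x ∈ Set.Ioo r1 s2 :=
      ⟨lt_of_le_of_ne hxI.1 (Ne.symm hmem.1), lt_of_le_of_ne hxI.2 hmem.2⟩
    exact hxn (hbound x hxIoo)
  -- compute the barrier integral
  have hwval : (∫ s in r1..s2, 2 * K * w s)
      = (2 * K * ε / θ) * (Real.exp (θ * (t - r1)) - Real.exp (θ * (t - s2))) := by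
    have hder : ∀ x ∈ Set.uIcc r1 s2,
        HasDerivAt (fun s => -(2 * K * ε / θ) * Real.exp (θ * (t - s)))
          (2 * K * w x) x := by
      intro x _
      have h1 : HasDerivAt (fun s : ℝ => t - s) (-1) x := (hasDerivAt_id x).const_sub t
      have h2 : HasDerivAt (fun s : ℝ => θ * (t - s)) (θ * (-1)) x := h1.const_mul θ
      have h3 := h2.exp
      have h4 := h3.const_mul (-(2 * K * ε / θ))
      refine h4.congr_deriv ?_
      have hθne : θ ≠ 0 := hθpos.ne'
      rw [hw]
      field_simp
    rw [intervalIntegral.integral_eq_sub_of_hasDerivAt hder hwint]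
    ring
  -- final contradiction
  have hg1s2 : g1 s2 ≤ w s2 / 2 := hs2T.2
  have he12 : Real.exp (θ * (t - s2)) ≤ Real.exp (θ * (t - r1)) := by
    apply Real.exp_le_exp.2
    apply mul_le_mul_of_nonneg_left _ (le_of_lt hθpos)
    linarith [hr1s2]
  set e1 := Real.exp (θ * (t - r1)) with he1
  set e2 := Real.exp (θ * (t - s2)) with he2
  have he2pos : 0 < e2 := Real.exp_pos _
  have hg1s2' : g1 s2 ≤ ε * Real.exp (θ * (t - s2)) / 2 := hg1s2
  have hkey : g1 r1 - g1 s2 ≤ (2 * K * ε / θ) * (e1 - e2) := by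
    calc g1 r1 - g1 s2 = ∫ s in r1..s2, Q1 s := hQval.symm
      _ ≤ ∫ s in r1..s2, 2 * K * w s := hmono
      _ = (2 * K * ε / θ) * (e1 - e2) := hwval
  have hchain : ε * e1 ≤ ε * e2 / 2 + (2 * K * ε / θ) * (e1 - e2) := by
    linarith [hw1, hg1s2', hkey]
  have h14 : 2 * K / θ ≤ 1 / 4 := by
    rw [div_le_iff₀ hθpos]
    linarith
  have hdiv : (2 * K * ε / θ) * (e1 - e2) ≤ (1 / 4) * (ε * (e1 - e2)) := by
    have hnn : 0 ≤ ε * (e1 - e2) := mul_nonneg (le_of_lt hε) (by linarith)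
    calc (2 * K * ε / θ) * (e1 - e2) = (2 * K / θ) * (ε * (e1 - e2)) := by ring
      _ ≤ (1 / 4) * (ε * (e1 - e2)) := mul_le_mul_of_nonneg_right h14 hnn
  nlinarith [mul_pos hε he2pos, mul_le_mul_of_nonneg_left he12 (le_of_lt hε)]

/-- Abstract Grönwall-type comparison lemma. -/
lemma gronwall (r0 t : ℝ) (hr0 : r0 ≤ t) (g1 g2 Q1 Q2 : ℝ → ℝ)
    (hg1c : ContinuousOn g1 (Set.Icc r0 t)) (hg2c : ContinuousOn g2 (Set.Icc r0 t))
    (hInt1 : ∀ a b, a ∈ Set.Icc r0 t → b ∈ Set.Icc r0 t →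
      IntervalIntegrable Q1 volume a b)
    (hInt2 : ∀ a b, a ∈ Set.Icc r0 t → b ∈ Set.Icc r0 t →
      IntervalIntegrable Q2 volume a b)
    (heq1 : ∀ r ∈ Set.Icc r0 t, g1 r = ∫ s in r..t, Q1 s)
    (heq2 : ∀ r ∈ Set.Icc r0 t, g2 r = ∫ s in r..t, Q2 s)
    (K : ℝ) (hK : 0 ≤ K)
    (hQ1 : ∀ s ∈ Set.Icc r0 t, 0 ≤ g1 s →
      Q1 s ≤ K * (max (g1 s) 0 + max (g2 s) 0))
    (hQ2 : ∀ s ∈ Set.Icc r0 t, 0 ≤ g2 s →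
      Q2 s ≤ K * (max (g1 s) 0 + max (g2 s) 0)) :
    ∀ r ∈ Set.Icc r0 t, g1 r ≤ 0 ∧ g2 r ≤ 0 := by
  set θ : ℝ := 8 * K + 1 with hθ
  have hθpos : 0 < θ := by rw [hθ]; linarith
  -- key claim
  have key : ∀ ε > 0, ∀ r ∈ Set.Icc r0 t,
      g1 r < ε * Real.exp (θ * (t - r)) ∧ g2 r < ε * Real.exp (θ * (t - r)) := by
    intro ε hε
    by_contra hcon
    push_neg at hcon
    obtain ⟨r, hrI, hr⟩ := hcon
    set S : Set ℝ := Set.Icc r0 t ∩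
      {s | ε * Real.exp (θ * (t - s)) ≤ g1 s ∨ ε * Real.exp (θ * (t - s)) ≤ g2 s}
      with hS
    have hSne : S.Nonempty := by
      refine ⟨r, hrI, ?_⟩
      simp only [Set.mem_setOf_eq]
      by_cases h1 : g1 r < ε * Real.exp (θ * (t - r))
      · exact Or.inr (hr h1)
      · exact Or.inl (not_lt.1 h1)
    have hwcont : Continuous fun s => ε * Real.exp (θ * (t - s)) :=
      continuous_const.mul
        (Real.continuous_exp.comp (continuous_const.mul (continuous_const.sub continuous_id)))
    have hSclosed : IsClosed S := by
      have e1 : IsClosed (Set.Icc r0 t ∩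
          (fun s => ε * Real.exp (θ * (t - s)) - g1 s) ⁻¹' Set.Iic 0) :=
        ((hwcont.continuousOn).sub hg1c).preimage_isClosed_of_isClosed
          isClosed_Icc isClosed_Iic
      have e2 : IsClosed (Set.Icc r0 t ∩
          (fun s => ε * Real.exp (θ * (t - s)) - g2 s) ⁻¹' Set.Iic 0) :=
        ((hwcont.continuousOn).sub hg2c).preimage_isClosed_of_isClosed
          isClosed_Icc isClosed_Iic
      have : S = (Set.Icc r0 t ∩
          (fun s => ε * Real.exp (θ * (t - s)) - g1 s) ⁻¹' Set.Iic 0) ∪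
          (Set.Icc r0 t ∩
          (fun s => ε * Real.exp (θ * (t - s)) - g2 s) ⁻¹' Set.Iic 0) := by
        ext s
        simp only [hS, Set.mem_inter_iff, Set.mem_union, Set.mem_setOf_eq,
          Set.mem_preimage, Set.mem_Iic, sub_nonpos]
        tauto
      rw [this]
      exact e1.union e2
    have hScomp : IsCompact S :=
      IsCompact.of_isClosed_subset isCompact_Icc hSclosed Set.inter_subset_left
    set r1 := sSup S with hr1def
    have hr1S : r1 ∈ S := hScomp.sSup_mem hSne
    have hr1I : r1 ∈ Set.Icc r0 t := hr1S.1
    have hg1t : g1 t = 0 := by rw [heq1 t ⟨hr0, le_rfl⟩, intervalIntegral.integral_same]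
    have hg2t : g2 t = 0 := by rw [heq2 t ⟨hr0, le_rfl⟩, intervalIntegral.integral_same]
    have hr1t : r1 < t := by
      rcases lt_or_eq_of_le hr1I.2 with h | h
      · exact h
      · exfalso
        have := hr1S.2
        rw [h] at this
        simp only [Set.mem_setOf_eq, hg1t, hg2t, sub_self, mul_zero, Real.exp_zero,
          mul_one] at this
        rcases this with h' | h' <;> linarith
    have hlt : ∀ s, r1 < s → s ≤ t →
        g1 s < ε * Real.exp (θ * (t - s)) ∧ g2 s < ε * Real.exp (θ * (t - s)) := by
      intro s hs1 hs2
      have hsI : s ∈ Set.Icc r0 t := ⟨hr1I.1.trans (le_of_lt hs1), hs2⟩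
      have hsS : s ∉ S := fun hmem => absurd (le_csSup hScomp.bddAbove hmem) (not_le.2 hs1)
      have := hsS
      simp only [hS, Set.mem_inter_iff, Set.mem_setOf_eq, not_and, not_or, not_le] at this
      exact this hsI
    rcases hr1S.2 with hc | hc
    · exact crossing r0 t hr0 g1 g2 Q1 hg1c hInt1 heq1 K ε θ hK hθ hε hQ1
        r1 hr1I hr1t hc hlt
    · exact crossing r0 t hr0 g2 g1 Q2 hg2c hInt2 heq2 K ε θ hK hθ hε
        (by intro s hs hg; rw [add_comm]; exact hQ2 s hs hg)
        r1 hr1I hr1t hc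
        (fun s h1 h2 => (hlt s h1 h2).symm)
  -- conclude
  intro r hrI
  constructor
  · by_contra hpos
    push_neg at hpos
    set ε := g1 r / (2 * Real.exp (θ * (t - r0))) with hε
    have hεpos : 0 < ε := div_pos hpos (by positivity)
    have h1 := (key ε hεpos r hrI).1
    have h2 : Real.exp (θ * (t - r)) ≤ Real.exp (θ * (t - r0)) := by
      apply Real.exp_le_exp.2
      apply mul_le_mul_of_nonneg_left _ (le_of_lt hθpos)
      linarith [hrI.1]
    have h3 : ε * Real.exp (θ * (t - r)) ≤ ε * Real.exp (θ * (t - r0)) :=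
      mul_le_mul_of_nonneg_left h2 (le_of_lt hεpos)
    have h4 : ε * Real.exp (θ * (t - r0)) = g1 r / 2 := by
      rw [hε]
      field_simp
    linarith
  · by_contra hpos
    push_neg at hpos
    set ε := g2 r / (2 * Real.exp (θ * (t - r0))) with hε
    have hεpos : 0 < ε := div_pos hpos (by positivity)
    have h1 := (key ε hεpos r hrI).2
    have h2 : Real.exp (θ * (t - r)) ≤ Real.exp (θ * (t - r0)) := by
      apply Real.exp_le_exp.2
      apply mul_le_mul_of_nonneg_left _ (le_of_lt hθpos)
      linarith [hrI.1]
    have h3 : ε * Real.exp (θ * (t - r)) ≤ ε * Real.exp (θ * (t - r0)) :=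
      mul_le_mul_of_nonneg_left h2 (le_of_lt hεpos)
    have h4 : ε * Real.exp (θ * (t - r0)) = g2 r / 2 := by
      rw [hε]
      field_simp
    linarith

lemma phi1_bound (b : Matrix (Fin 2) (Fin 2) ℝ) (c1 : ℝ) (hc1 : 0 ≤ c1)
    {m : Measure (ℝ × ℝ)} (hsupp : m quadrantᶜ = 0)
    (hmom : ∫⁻ z, ENNReal.ofReal (min z.1 (z.1 ^ 2) + z.2) ∂m < ⊤)
    {M : ℝ} (hM : 0 ≤ M) :
    ∀ v : ℝ × ℝ, 0 ≤ v.1 → 0 ≤ v.2 → v.1 ≤ M → v.2 ≤ M →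
      |phi1 b c1 m v| ≤ (|b 0 0| + |b 0 1|) * M + c1 * M ^ 2
        + (M ^ 2 + M + M) * ∫ z, (min z.1 (z.1 ^ 2) + z.2) ∂m := by
  intro v h1 h2 h3 h4
  have hae := ae_quadrant hsupp
  have hIh : 0 ≤ ∫ z, (min z.1 (z.1 ^ 2) + z.2) ∂m := integral_nonneg_of_ae (by
    filter_upwards [hae] with z hz
    have : (0:ℝ) ≤ min z.1 (z.1 ^ 2) := le_min hz.1 (sq_nonneg _)
    simp only [Pi.zero_apply]
    linarith [hz.2])
  have hW : v.1 ^ 2 + v.1 + v.2 ≤ M ^ 2 + M + M := by nlinarith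
  have hint : |∫ z, (Real.exp (-(v.1 * z.1 + v.2 * z.2)) - 1
      + (v.1 * z.1 + v.2 * z.2)) ∂m| ≤ (M ^ 2 + M + M) * ∫ z, (min z.1 (z.1 ^ 2) + z.2) ∂m := by
    rw [← Real.norm_eq_abs, ← integral_const_mul]
    refine norm_integral_le_of_norm_le ((integrable_h hsupp hmom).const_mul _) ?_
    filter_upwards [hae] with z hz
    have hnn := exp_term_nonneg (v.1 * z.1 + v.2 * z.2)
    have hmb := master_bound h1 h2 hz.1 hz.2
    have hh : (0:ℝ) ≤ min z.1 (z.1 ^ 2) + z.2 := by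
      have : (0:ℝ) ≤ min z.1 (z.1 ^ 2) := le_min hz.1 (sq_nonneg _)
      linarith [hz.2]
    rw [Real.norm_eq_abs, abs_of_nonneg hnn]
    nlinarith [mul_nonneg (sub_nonneg.2 hW) hh]
  have habs : |phi1 b c1 m v| ≤ |b 0 0| * v.1 + |b 0 1| * v.2 + c1 * v.1 ^ 2
      + |∫ z, (Real.exp (-(v.1 * z.1 + v.2 * z.2)) - 1 + (v.1 * z.1 + v.2 * z.2)) ∂m| := by
    simp only [phi1]
    have e1 : |b 0 0 * v.1| = |b 0 0| * v.1 := by rw [abs_mul, abs_of_nonneg h1]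
    have e2 : |b 0 1 * v.2| = |b 0 1| * v.2 := by rw [abs_mul, abs_of_nonneg h2]
    have e3 : |c1 * v.1 ^ 2| = c1 * v.1 ^ 2 := abs_of_nonneg (by positivity)
    calc |b 0 0 * v.1 + b 0 1 * v.2 + c1 * v.1 ^ 2 + _|
        ≤ |b 0 0 * v.1| + |b 0 1 * v.2| + |c1 * v.1 ^ 2| + _ := by
          exact (abs_add_le _ _).trans (by
            gcongr
            exact (abs_add_le _ _).trans (by
              gcongr
              exact abs_add_le _ _))
      _ = _ := by rw [e1, e2, e3]
  have hb1 : |b 0 0| * v.1 ≤ |b 0 0| * M := by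
    apply mul_le_mul_of_nonneg_left h3 (abs_nonneg _)
  have hb2 : |b 0 1| * v.2 ≤ |b 0 1| * M := by
    apply mul_le_mul_of_nonneg_left h4 (abs_nonneg _)
  have hq : c1 * v.1 ^ 2 ≤ c1 * M ^ 2 := by
    apply mul_le_mul_of_nonneg_left _ hc1
    nlinarith
  linarith

lemma phiTilde1_bound (b : Matrix (Fin 2) (Fin 2) ℝ) (c1 : ℝ) (hc1 : 0 ≤ c1)
    {m : Measure (ℝ × ℝ)} (hsupp : m quadrantᶜ = 0)
    (hmom : ∫⁻ z, ENNReal.ofReal (min z.1 (z.1 ^ 2) + z.2) ∂m < ⊤)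
    {M : ℝ} (hM : 0 ≤ M) :
    ∀ v : ℝ × ℝ, 0 ≤ v.1 → 0 ≤ v.2 → v.1 ≤ M → v.2 ≤ M →
      |phiTilde1 b c1 m v| ≤ (|b 0 0| + |b 0 1|) * M + c1 * M ^ 2
        + (M ^ 2 + M + M) * ∫ z, (min z.1 (z.1 ^ 2) + z.2) ∂m := by
  intro v h1 h2 h3 h4
  have hae := ae_quadrant hsupp
  have hW : v.1 ^ 2 + v.1 + (0:ℝ) ≤ M ^ 2 + M + M := by nlinarith
  have hint : |∫ z, (Real.exp (-(z.1 * v.1)) - 1 + z.1 * v.1) ∂m|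
      ≤ (M ^ 2 + M + M) * ∫ z, (min z.1 (z.1 ^ 2) + z.2) ∂m := by
    rw [← Real.norm_eq_abs, ← integral_const_mul]
    refine norm_integral_le_of_norm_le ((integrable_h hsupp hmom).const_mul _) ?_
    filter_upwards [hae] with z hz
    have hnn := exp_term_nonneg (z.1 * v.1)
    have hcomm : z.1 * v.1 = v.1 * z.1 + 0 * z.2 := by ring
    have hmb := master_bound h1 le_rfl hz.1 hz.2 (l1 := v.1) (l2 := 0)
    have hh : (0:ℝ) ≤ min z.1 (z.1 ^ 2) + z.2 := by
      have : (0:ℝ) ≤ min z.1 (z.1 ^ 2) := le_min hz.1 (sq_nonneg _)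
      linarith [hz.2]
    rw [Real.norm_eq_abs, abs_of_nonneg hnn, hcomm]
    nlinarith [mul_nonneg (sub_nonneg.2 hW) hh]
  have habs : |phiTilde1 b c1 m v| ≤ |b 0 0| * v.1 + |b 0 1| * v.2 + c1 * v.1 ^ 2
      + |∫ z, (Real.exp (-(z.1 * v.1)) - 1 + z.1 * v.1) ∂m| := by
    simp only [phiTilde1]
    have e1 : |b 0 0 * v.1| = |b 0 0| * v.1 := by rw [abs_mul, abs_of_nonneg h1]
    have e2 : |b 0 1 * v.2| = |b 0 1| * v.2 := by rw [abs_mul, abs_of_nonneg h2]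
    have e3 : |c1 * v.1 ^ 2| = c1 * v.1 ^ 2 := abs_of_nonneg (by positivity)
    calc |b 0 0 * v.1 + b 0 1 * v.2 + c1 * v.1 ^ 2 + _|
        ≤ |b 0 0 * v.1| + |b 0 1 * v.2| + |c1 * v.1 ^ 2| + _ := by
          exact (abs_add_le _ _).trans (by
            gcongr
            exact (abs_add_le _ _).trans (by
              gcongr
              exact abs_add_le _ _))
      _ = _ := by rw [e1, e2, e3]
  have hb1 : |b 0 0| * v.1 ≤ |b 0 0| * M := mul_le_mul_of_nonneg_left h3 (abs_nonneg _)
  have hb2 : |b 0 1| * v.2 ≤ |b 0 1| * M := mul_le_mul_of_nonneg_left h4 (abs_nonneg _)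
  have hq : c1 * v.1 ^ 2 ≤ c1 * M ^ 2 := by
    apply mul_le_mul_of_nonneg_left _ hc1
    nlinarith
  linarith

lemma phi2_bound (b : Matrix (Fin 2) (Fin 2) ℝ) (c2 : ℝ) (hc2 : 0 ≤ c2)
    {m : Measure (ℝ × ℝ)} (hsupp : m quadrantᶜ = 0)
    (hmom : ∫⁻ z, ENNReal.ofReal (min z.2 (z.2 ^ 2) + z.1) ∂m < ⊤)
    {M : ℝ} (hM : 0 ≤ M) :
    ∀ v : ℝ × ℝ, 0 ≤ v.1 → 0 ≤ v.2 → v.1 ≤ M → v.2 ≤ M →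
      |phi2 b c2 m v| ≤ (|b 1 0| + |b 1 1|) * M + c2 * M ^ 2
        + (M ^ 2 + M + M) * ∫ z, (min z.2 (z.2 ^ 2) + z.1) ∂m := by
  intro v h1 h2 h3 h4
  have hae := ae_quadrant hsupp
  have hW : v.2 ^ 2 + v.2 + v.1 ≤ M ^ 2 + M + M := by nlinarith
  have hint : |∫ z, (Real.exp (-(v.1 * z.1 + v.2 * z.2)) - 1
      + (v.1 * z.1 + v.2 * z.2)) ∂m|
      ≤ (M ^ 2 + M + M) * ∫ z, (min z.2 (z.2 ^ 2) + z.1) ∂m := by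
    rw [← Real.norm_eq_abs, ← integral_const_mul]
    refine norm_integral_le_of_norm_le ((integrable_h2 hsupp hmom).const_mul _) ?_
    filter_upwards [hae] with z hz
    have hnn := exp_term_nonneg (v.1 * z.1 + v.2 * z.2)
    have hcomm : v.1 * z.1 + v.2 * z.2 = v.2 * z.2 + v.1 * z.1 := by ring
    have hmb := master_bound h2 h1 hz.2 hz.1 (l1 := v.2) (l2 := v.1)
    have hh : (0:ℝ) ≤ min z.2 (z.2 ^ 2) + z.1 := by
      have : (0:ℝ) ≤ min z.2 (z.2 ^ 2) := le_min hz.2 (sq_nonneg _)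
      linarith [hz.1]
    rw [Real.norm_eq_abs, abs_of_nonneg hnn, hcomm]
    nlinarith [mul_nonneg (sub_nonneg.2 hW) hh]
  have habs : |phi2 b c2 m v| ≤ |b 1 0| * v.1 + |b 1 1| * v.2 + c2 * v.2 ^ 2
      + |∫ z, (Real.exp (-(v.1 * z.1 + v.2 * z.2)) - 1 + (v.1 * z.1 + v.2 * z.2)) ∂m| := by
    simp only [phi2]
    have e1 : |b 1 0 * v.1| = |b 1 0| * v.1 := by rw [abs_mul, abs_of_nonneg h1]
    have e2 : |b 1 1 * v.2| = |b 1 1| * v.2 := by rw [abs_mul, abs_of_nonneg h2]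
    have e3 : |c2 * v.2 ^ 2| = c2 * v.2 ^ 2 := abs_of_nonneg (by positivity)
    calc |b 1 0 * v.1 + b 1 1 * v.2 + c2 * v.2 ^ 2 + _|
        ≤ |b 1 0 * v.1| + |b 1 1 * v.2| + |c2 * v.2 ^ 2| + _ := by
          exact (abs_add_le _ _).trans (by
            gcongr
            exact (abs_add_le _ _).trans (by
              gcongr
              exact abs_add_le _ _))
      _ = _ := by rw [e1, e2, e3]
  have hb1 : |b 1 0| * v.1 ≤ |b 1 0| * M := mul_le_mul_of_nonneg_left h3 (abs_nonneg _)
  have hb2 : |b 1 1| * v.2 ≤ |b 1 1| * M := mul_le_mul_of_nonneg_left h4 (abs_nonneg _)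
  have hq : c2 * v.2 ^ 2 ≤ c2 * M ^ 2 := by
    apply mul_le_mul_of_nonneg_left _ hc2
    nlinarith
  linarith

lemma phiTilde2_bound (b : Matrix (Fin 2) (Fin 2) ℝ) (c2 : ℝ) (hc2 : 0 ≤ c2)
    {m : Measure (ℝ × ℝ)} (hsupp : m quadrantᶜ = 0)
    (hmom : ∫⁻ z, ENNReal.ofReal (min z.2 (z.2 ^ 2) + z.1) ∂m < ⊤)
    {M : ℝ} (hM : 0 ≤ M) :
    ∀ v : ℝ × ℝ, 0 ≤ v.1 → 0 ≤ v.2 → v.1 ≤ M → v.2 ≤ M →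
      |phiTilde2 b c2 m v| ≤ (|b 1 0| + |b 1 1|) * M + c2 * M ^ 2
        + (M ^ 2 + M + M) * ∫ z, (min z.2 (z.2 ^ 2) + z.1) ∂m := by
  intro v h1 h2 h3 h4
  have hae := ae_quadrant hsupp
  have hW : v.2 ^ 2 + v.2 + (0:ℝ) ≤ M ^ 2 + M + M := by nlinarith
  have hint : |∫ z, (Real.exp (-(z.2 * v.2)) - 1 + z.2 * v.2) ∂m|
      ≤ (M ^ 2 + M + M) * ∫ z, (min z.2 (z.2 ^ 2) + z.1) ∂m := by
    rw [← Real.norm_eq_abs, ← integral_const_mul]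
    refine norm_integral_le_of_norm_le ((integrable_h2 hsupp hmom).const_mul _) ?_
    filter_upwards [hae] with z hz
    have hnn := exp_term_nonneg (z.2 * v.2)
    have hcomm : z.2 * v.2 = v.2 * z.2 + 0 * z.1 := by ring
    have hmb := master_bound h2 le_rfl hz.2 hz.1 (l1 := v.2) (l2 := 0)
    have hh : (0:ℝ) ≤ min z.2 (z.2 ^ 2) + z.1 := by
      have : (0:ℝ) ≤ min z.2 (z.2 ^ 2) := le_min hz.2 (sq_nonneg _)
      linarith [hz.1]
    rw [Real.norm_eq_abs, abs_of_nonneg hnn, hcomm]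
    nlinarith [mul_nonneg (sub_nonneg.2 hW) hh]
  have habs : |phiTilde2 b c2 m v| ≤ |b 1 0| * v.1 + |b 1 1| * v.2 + c2 * v.2 ^ 2
      + |∫ z, (Real.exp (-(z.2 * v.2)) - 1 + z.2 * v.2) ∂m| := by
    simp only [phiTilde2]
    have e1 : |b 1 0 * v.1| = |b 1 0| * v.1 := by rw [abs_mul, abs_of_nonneg h1]
    have e2 : |b 1 1 * v.2| = |b 1 1| * v.2 := by rw [abs_mul, abs_of_nonneg h2]
    have e3 : |c2 * v.2 ^ 2| = c2 * v.2 ^ 2 := abs_of_nonneg (by positivity)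
    calc |b 1 0 * v.1 + b 1 1 * v.2 + c2 * v.2 ^ 2 + _|
        ≤ |b 1 0 * v.1| + |b 1 1 * v.2| + |c2 * v.2 ^ 2| + _ := by
          exact (abs_add_le _ _).trans (by
            gcongr
            exact (abs_add_le _ _).trans (by
              gcongr
              exact abs_add_le _ _))
      _ = _ := by rw [e1, e2, e3]
  have hb1 : |b 1 0| * v.1 ≤ |b 1 0| * M := mul_le_mul_of_nonneg_left h3 (abs_nonneg _)
  have hb2 : |b 1 1| * v.2 ≤ |b 1 1| * M := mul_le_mul_of_nonneg_left h4 (abs_nonneg _)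
  have hq : c2 * v.2 ^ 2 ≤ c2 * M ^ 2 := by
    apply mul_le_mul_of_nonneg_left _ hc2
    nlinarith
  linarith

lemma phi1_meas (b : Matrix (Fin 2) (Fin 2) ℝ) (c1 : ℝ) (m : Measure (ℝ × ℝ))
    [SigmaFinite m] : Measurable (phi1 b c1 m) := by
  have h1 : StronglyMeasurable fun v : ℝ × ℝ =>
      ∫ z, (Real.exp (-(v.1 * z.1 + v.2 * z.2)) - 1 + (v.1 * z.1 + v.2 * z.2)) ∂m := by
    apply MeasureTheory.StronglyMeasurable.integral_prod_right
      (f := fun (v z : ℝ × ℝ) =>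
        Real.exp (-(v.1 * z.1 + v.2 * z.2)) - 1 + (v.1 * z.1 + v.2 * z.2))
    apply Continuous.stronglyMeasurable
    fun_prop
  unfold phi1
  apply Measurable.add _ h1.measurable
  fun_prop

lemma phi2_meas (b : Matrix (Fin 2) (Fin 2) ℝ) (c2 : ℝ) (m : Measure (ℝ × ℝ))
    [SigmaFinite m] : Measurable (phi2 b c2 m) := by
  have h1 : StronglyMeasurable fun v : ℝ × ℝ =>
      ∫ z, (Real.exp (-(v.1 * z.1 + v.2 * z.2)) - 1 + (v.1 * z.1 + v.2 * z.2)) ∂m := by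
    apply MeasureTheory.StronglyMeasurable.integral_prod_right
      (f := fun (v z : ℝ × ℝ) =>
        Real.exp (-(v.1 * z.1 + v.2 * z.2)) - 1 + (v.1 * z.1 + v.2 * z.2))
    apply Continuous.stronglyMeasurable
    fun_prop
  unfold phi2
  apply Measurable.add _ h1.measurable
  fun_prop

lemma phiTilde1_meas (b : Matrix (Fin 2) (Fin 2) ℝ) (c1 : ℝ) (m : Measure (ℝ × ℝ))
    [SigmaFinite m] : Measurable (phiTilde1 b c1 m) := by
  have h1 : StronglyMeasurable fun v : ℝ × ℝ =>
      ∫ z, (Real.exp (-(z.1 * v.1)) - 1 + z.1 * v.1) ∂m := by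
    apply MeasureTheory.StronglyMeasurable.integral_prod_right
      (f := fun (v z : ℝ × ℝ) => Real.exp (-(z.1 * v.1)) - 1 + z.1 * v.1)
    apply Continuous.stronglyMeasurable
    fun_prop
  unfold phiTilde1
  apply Measurable.add _ h1.measurable
  fun_prop

lemma phiTilde2_meas (b : Matrix (Fin 2) (Fin 2) ℝ) (c2 : ℝ) (m : Measure (ℝ × ℝ))
    [SigmaFinite m] : Measurable (phiTilde2 b c2 m) := by
  have h1 : StronglyMeasurable fun v : ℝ × ℝ =>
      ∫ z, (Real.exp (-(z.2 * v.2)) - 1 + z.2 * v.2) ∂m := by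
    apply MeasureTheory.StronglyMeasurable.integral_prod_right
      (f := fun (v z : ℝ × ℝ) => Real.exp (-(z.2 * v.2)) - 1 + z.2 * v.2)
    apply Continuous.stronglyMeasurable
    fun_prop
  unfold phiTilde2
  apply Measurable.add _ h1.measurable
  fun_prop

/-- A function a.e.-measurable and bounded on `[r0,t]` is interval integrable on
subintervals. -/
lemma intervalIntegrable_of_bdd {f : ℝ → ℝ} {r0 t D : ℝ}
    (hmeas : AEStronglyMeasurable f (volume.restrict (Set.Icc r0 t)))
    (hbdd : ∀ s ∈ Set.Icc r0 t, |f s| ≤ D) :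
    ∀ a b', a ∈ Set.Icc r0 t → b' ∈ Set.Icc r0 t →
      IntervalIntegrable f volume a b' := by
  have key : ∀ a b', a ∈ Set.Icc r0 t → b' ∈ Set.Icc r0 t →
      IntegrableOn f (Set.Ioc a b') volume := by
    intro a b' ha hb'
    have hsub : Set.Ioc a b' ⊆ Set.Icc r0 t := by
      intro x hx
      exact ⟨ha.1.trans (le_of_lt hx.1), hx.2.trans hb'.2⟩
    constructor
    · exact hmeas.mono_measure (Measure.restrict_mono hsub le_rfl)
    · apply HasFiniteIntegral.restrict_of_bounded (C := D) measure_Ioc_lt_top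
      rw [ae_restrict_iff' measurableSet_Ioc]
      filter_upwards with x hx
      rw [Real.norm_eq_abs]
      exact hbdd x (hsub hx)
  intro a b' ha hb'
  exact ⟨key a b' ha hb', key b' a hb' ha⟩

/-- Comparison of the random cumulant semigroups driven by `φ` and by `φ̃`: any continuous
quadrant-valued solutions `u` and `Ũ` of the backward equations
`u⁽ⁱ⁾(r) = λ_i − ∫_r^t e^{ξ(s)} φ_i(e^{−ξ(s)} u(s)) ds` and
`Ũ⁽ⁱ⁾(r) = λ_i − ∫_r^t e^{ξ(s)} φ̃_i(e^{−ξ(s)} Ũ(s)) ds` satisfy `u⁽ⁱ⁾ ≤ Ũ⁽ⁱ⁾` on `[r0, t]`. -/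
theorem stmt13 (b : Matrix (Fin 2) (Fin 2) ℝ) (c1 c2 : ℝ) (hc1 : 0 ≤ c1) (hc2 : 0 ≤ c2)
    (m1 m2 : Measure (ℝ × ℝ)) [SigmaFinite m1] [SigmaFinite m2]
    (hsupp1 : m1 quadrantᶜ = 0) (hzero1 : m1 {0} = 0)
    (hsupp2 : m2 quadrantᶜ = 0) (hzero2 : m2 {0} = 0)
    (hmom1 : ∫⁻ z, ENNReal.ofReal (min z.1 (z.1 ^ 2) + z.2) ∂m1 < ⊤)
    (hmom2 : ∫⁻ z, ENNReal.ofReal (min z.2 (z.2 ^ 2) + z.1) ∂m2 < ⊤)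
    (hadm1 : b 0 1 + ∫ z, z.2 ∂m1 ≤ 0)
    (hadm2 : b 1 0 + ∫ z, z.1 ∂m2 ≤ 0)
    (t r0 : ℝ) (hr0 : r0 ≤ t)
    (ξ : ℝ → ℝ) (hξmeas : Measurable ξ)
    (hξbdd : ∃ C : ℝ, ∀ s ∈ Set.Icc r0 t, |ξ s| ≤ C)
    (lam : ℝ × ℝ) (hlam : lam ∈ quadrant)
    (u U : ℝ → ℝ × ℝ)
    (hucont : ContinuousOn u (Set.Icc r0 t))
    (hUcont : ContinuousOn U (Set.Icc r0 t))
    (huquad : ∀ r ∈ Set.Icc r0 t, u r ∈ quadrant)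
    (hUquad : ∀ r ∈ Set.Icc r0 t, U r ∈ quadrant)
    (hueq1 : ∀ r ∈ Set.Icc r0 t,
      (u r).1 = lam.1 - ∫ s in r..t,
        Real.exp (ξ s) * phi1 b c1 m1 (Real.exp (-ξ s) • u s))
    (hueq2 : ∀ r ∈ Set.Icc r0 t,
      (u r).2 = lam.2 - ∫ s in r..t,
        Real.exp (ξ s) * phi2 b c2 m2 (Real.exp (-ξ s) • u s))
    (hUeq1 : ∀ r ∈ Set.Icc r0 t,
      (U r).1 = lam.1 - ∫ s in r..t,
        Real.exp (ξ s) * phiTilde1 b c1 m1 (Real.exp (-ξ s) • U s))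
    (hUeq2 : ∀ r ∈ Set.Icc r0 t,
      (U r).2 = lam.2 - ∫ s in r..t,
        Real.exp (ξ s) * phiTilde2 b c2 m2 (Real.exp (-ξ s) • U s)) :
    ∀ r ∈ Set.Icc r0 t, (u r).1 ≤ (U r).1 ∧ (u r).2 ≤ (U r).2 := by
  obtain ⟨C0, hC0⟩ := hξbdd
  obtain ⟨Bu, hBu⟩ := isCompact_Icc.exists_bound_of_continuousOn hucont
  obtain ⟨BU, hBU⟩ := isCompact_Icc.exists_bound_of_continuousOn hUcont
  set M : ℝ := Real.exp C0 * (max Bu BU + 1) with hMdef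
  have hBu0 : 0 ≤ Bu := le_trans (norm_nonneg (u r0)) (hBu r0 ⟨le_rfl, hr0⟩)
  have hmax0 : 0 ≤ max Bu BU := hBu0.trans (le_max_left _ _)
  have hM : 0 ≤ M := mul_nonneg (Real.exp_pos C0).le (by linarith)
  -- exponential bounds
  have hexp_le : ∀ s ∈ Set.Icc r0 t, Real.exp (-ξ s) ≤ Real.exp C0 ∧
      Real.exp (ξ s) ≤ Real.exp C0 := by
    intro s hs
    have h := abs_le.1 (hC0 s hs)
    exact ⟨Real.exp_le_exp.2 (by linarith), Real.exp_le_exp.2 (by linarith)⟩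
  have key_bnd : ∀ s ∈ Set.Icc r0 t, ∀ X : ℝ, 0 ≤ X → X ≤ max Bu BU + 1 →
      Real.exp (-ξ s) * X ≤ M := by
    intro s hs X hX1 hX2
    exact mul_le_mul (hexp_le s hs).1 hX2 hX1 (Real.exp_pos C0).le
  have hcomp_u : ∀ s ∈ Set.Icc r0 t,
      Real.exp (-ξ s) * (u s).1 ≤ M ∧ Real.exp (-ξ s) * (u s).2 ≤ M := by
    intro s hs
    have h1 : |(u s).1| ≤ ‖u s‖ := by rw [← Real.norm_eq_abs]; exact norm_fst_le (u s)
    have h2 : |(u s).2| ≤ ‖u s‖ := by rw [← Real.norm_eq_abs]; exact norm_snd_le (u s)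
    have h3 := hBu s hs
    have h4 := le_max_left Bu BU
    constructor
    · exact key_bnd s hs _ (huquad s hs).1 (by
        have := le_abs_self (u s).1; linarith)
    · exact key_bnd s hs _ (huquad s hs).2 (by
        have := le_abs_self (u s).2; linarith)
  have hcomp_U : ∀ s ∈ Set.Icc r0 t,
      Real.exp (-ξ s) * (U s).1 ≤ M ∧ Real.exp (-ξ s) * (U s).2 ≤ M := by
    intro s hs
    have h1 : |(U s).1| ≤ ‖U s‖ := by rw [← Real.norm_eq_abs]; exact norm_fst_le (U s)
    have h2 : |(U s).2| ≤ ‖U s‖ := by rw [← Real.norm_eq_abs]; exact norm_snd_le (U s)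
    have h3 := hBU s hs
    have h4 := le_max_right Bu BU
    constructor
    · exact key_bnd s hs _ (hUquad s hs).1 (by
        have := le_abs_self (U s).1; linarith)
    · exact key_bnd s hs _ (hUquad s hs).2 (by
        have := le_abs_self (U s).2; linarith)
  -- smul components
  have hsmul_u : ∀ s, (Real.exp (-ξ s) • u s) =
      (Real.exp (-ξ s) * (u s).1, Real.exp (-ξ s) * (u s).2) := fun s => rfl
  have hsmul_U : ∀ s, (Real.exp (-ξ s) • U s) =
      (Real.exp (-ξ s) * (U s).1, Real.exp (-ξ s) * (U s).2) := fun s => rfl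
  -- the four integrands
  set P1 : ℝ → ℝ := fun s => Real.exp (ξ s) * phi1 b c1 m1 (Real.exp (-ξ s) • u s)
    with hP1def
  set Pt1 : ℝ → ℝ := fun s => Real.exp (ξ s) * phiTilde1 b c1 m1 (Real.exp (-ξ s) • U s)
    with hPt1def
  set P2 : ℝ → ℝ := fun s => Real.exp (ξ s) * phi2 b c2 m2 (Real.exp (-ξ s) • u s)
    with hP2def
  set Pt2 : ℝ → ℝ := fun s => Real.exp (ξ s) * phiTilde2 b c2 m2 (Real.exp (-ξ s) • U s)
    with hPt2def
  -- measurability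
  have hlumeas : AEMeasurable (fun s => Real.exp (-ξ s) • u s)
      (volume.restrict (Set.Icc r0 t)) := by
    have hu : AEMeasurable u (volume.restrict (Set.Icc r0 t)) :=
      hucont.aemeasurable measurableSet_Icc
    have he : Measurable fun s => Real.exp (-ξ s) := Real.measurable_exp.comp hξmeas.neg
    exact (he.aemeasurable.smul hu)
  have hlUmeas : AEMeasurable (fun s => Real.exp (-ξ s) • U s)
      (volume.restrict (Set.Icc r0 t)) := by
    have hu : AEMeasurable U (volume.restrict (Set.Icc r0 t)) :=
      hUcont.aemeasurable measurableSet_Icc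
    have he : Measurable fun s => Real.exp (-ξ s) := Real.measurable_exp.comp hξmeas.neg
    exact (he.aemeasurable.smul hu)
  have heξ : Measurable fun s => Real.exp (ξ s) := Real.measurable_exp.comp hξmeas
  have hP1meas : AEStronglyMeasurable P1 (volume.restrict (Set.Icc r0 t)) :=
    (heξ.aemeasurable.mul ((phi1_meas b c1 m1).comp_aemeasurable hlumeas)).aestronglyMeasurable
  have hPt1meas : AEStronglyMeasurable Pt1 (volume.restrict (Set.Icc r0 t)) :=
    (heξ.aemeasurable.mul
      ((phiTilde1_meas b c1 m1).comp_aemeasurable hlUmeas)).aestronglyMeasurable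
  have hP2meas : AEStronglyMeasurable P2 (volume.restrict (Set.Icc r0 t)) :=
    (heξ.aemeasurable.mul ((phi2_meas b c2 m2).comp_aemeasurable hlumeas)).aestronglyMeasurable
  have hPt2meas : AEStronglyMeasurable Pt2 (volume.restrict (Set.Icc r0 t)) :=
    (heξ.aemeasurable.mul
      ((phiTilde2_meas b c2 m2).comp_aemeasurable hlUmeas)).aestronglyMeasurable
  -- boundedness
  set B1 : ℝ := (|b 0 0| + |b 0 1|) * M + c1 * M ^ 2
      + (M ^ 2 + M + M) * ∫ z, (min z.1 (z.1 ^ 2) + z.2) ∂m1 with hB1def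
  set B2 : ℝ := (|b 1 0| + |b 1 1|) * M + c2 * M ^ 2
      + (M ^ 2 + M + M) * ∫ z, (min z.2 (z.2 ^ 2) + z.1) ∂m2 with hB2def
  have hP1bdd : ∀ s ∈ Set.Icc r0 t, |P1 s| ≤ Real.exp C0 * B1 := by
    intro s hs
    have hb := phi1_bound b c1 hc1 hsupp1 hmom1 hM (Real.exp (-ξ s) • u s)
      (mul_nonneg (Real.exp_pos _).le (huquad s hs).1)
      (mul_nonneg (Real.exp_pos _).le (huquad s hs).2)
      (hcomp_u s hs).1 (hcomp_u s hs).2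
    rw [hP1def]
    simp only [abs_mul, Real.abs_exp]
    exact mul_le_mul (hexp_le s hs).2 hb (abs_nonneg _) (Real.exp_pos C0).le
  have hPt1bdd : ∀ s ∈ Set.Icc r0 t, |Pt1 s| ≤ Real.exp C0 * B1 := by
    intro s hs
    have hb := phiTilde1_bound b c1 hc1 hsupp1 hmom1 hM (Real.exp (-ξ s) • U s)
      (mul_nonneg (Real.exp_pos _).le (hUquad s hs).1)
      (mul_nonneg (Real.exp_pos _).le (hUquad s hs).2)
      (hcomp_U s hs).1 (hcomp_U s hs).2
    rw [hPt1def]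
    simp only [abs_mul, Real.abs_exp]
    exact mul_le_mul (hexp_le s hs).2 hb (abs_nonneg _) (Real.exp_pos C0).le
  have hP2bdd : ∀ s ∈ Set.Icc r0 t, |P2 s| ≤ Real.exp C0 * B2 := by
    intro s hs
    have hb := phi2_bound b c2 hc2 hsupp2 hmom2 hM (Real.exp (-ξ s) • u s)
      (mul_nonneg (Real.exp_pos _).le (huquad s hs).1)
      (mul_nonneg (Real.exp_pos _).le (huquad s hs).2)
      (hcomp_u s hs).1 (hcomp_u s hs).2
    rw [hP2def]
    simp only [abs_mul, Real.abs_exp]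
    exact mul_le_mul (hexp_le s hs).2 hb (abs_nonneg _) (Real.exp_pos C0).le
  have hPt2bdd : ∀ s ∈ Set.Icc r0 t, |Pt2 s| ≤ Real.exp C0 * B2 := by
    intro s hs
    have hb := phiTilde2_bound b c2 hc2 hsupp2 hmom2 hM (Real.exp (-ξ s) • U s)
      (mul_nonneg (Real.exp_pos _).le (hUquad s hs).1)
      (mul_nonneg (Real.exp_pos _).le (hUquad s hs).2)
      (hcomp_U s hs).1 (hcomp_U s hs).2
    rw [hPt2def]
    simp only [abs_mul, Real.abs_exp]
    exact mul_le_mul (hexp_le s hs).2 hb (abs_nonneg _) (Real.exp_pos C0).le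
  -- interval integrability
  have hIntP1 := intervalIntegrable_of_bdd hP1meas hP1bdd
  have hIntPt1 := intervalIntegrable_of_bdd hPt1meas hPt1bdd
  have hIntP2 := intervalIntegrable_of_bdd hP2meas hP2bdd
  have hIntPt2 := intervalIntegrable_of_bdd hPt2meas hPt2bdd
  -- difference integrands and equations
  set Q1 : ℝ → ℝ := fun s => Pt1 s - P1 s with hQ1def
  set Q2 : ℝ → ℝ := fun s => Pt2 s - P2 s with hQ2def
  set g1 : ℝ → ℝ := fun r => (u r).1 - (U r).1 with hg1def
  set g2 : ℝ → ℝ := fun r => (u r).2 - (U r).2 with hg2def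
  have hIntQ1 : ∀ a b', a ∈ Set.Icc r0 t → b' ∈ Set.Icc r0 t →
      IntervalIntegrable Q1 volume a b' := fun a b' ha hb' =>
    (hIntPt1 a b' ha hb').sub (hIntP1 a b' ha hb')
  have hIntQ2 : ∀ a b', a ∈ Set.Icc r0 t → b' ∈ Set.Icc r0 t →
      IntervalIntegrable Q2 volume a b' := fun a b' ha hb' =>
    (hIntPt2 a b' ha hb').sub (hIntP2 a b' ha hb')
  have heqg1 : ∀ r ∈ Set.Icc r0 t, g1 r = ∫ s in r..t, Q1 s := by
    intro r hr
    have h1 : (u r).1 = lam.1 - ∫ s in r..t, P1 s := hueq1 r hr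
    have h2 : (U r).1 = lam.1 - ∫ s in r..t, Pt1 s := hUeq1 r hr
    have h3 : (∫ s in r..t, Q1 s) = (∫ s in r..t, Pt1 s) - ∫ s in r..t, P1 s :=
      intervalIntegral.integral_sub (hIntPt1 r t hr ⟨hr0, le_rfl⟩)
        (hIntP1 r t hr ⟨hr0, le_rfl⟩)
    rw [hg1def]
    simp only []
    rw [h1, h2, h3]
    ring
  have heqg2 : ∀ r ∈ Set.Icc r0 t, g2 r = ∫ s in r..t, Q2 s := by
    intro r hr
    have h1 : (u r).2 = lam.2 - ∫ s in r..t, P2 s := hueq2 r hr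
    have h2 : (U r).2 = lam.2 - ∫ s in r..t, Pt2 s := hUeq2 r hr
    have h3 : (∫ s in r..t, Q2 s) = (∫ s in r..t, Pt2 s) - ∫ s in r..t, P2 s :=
      intervalIntegral.integral_sub (hIntPt2 r t hr ⟨hr0, le_rfl⟩)
        (hIntP2 r t hr ⟨hr0, le_rfl⟩)
    rw [hg2def]
    simp only []
    rw [h1, h2, h3]
    ring
  -- continuity of g1 g2
  have hg1c : ContinuousOn g1 (Set.Icc r0 t) :=
    (continuous_fst.comp_continuousOn hucont).sub (continuous_fst.comp_continuousOn hUcont)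
  have hg2c : ContinuousOn g2 (Set.Icc r0 t) :=
    (continuous_snd.comp_continuousOn hucont).sub (continuous_snd.comp_continuousOn hUcont)
  -- Lipschitz constant
  set K : ℝ := |b 0 0| + |b 0 1| + |b 1 0| + |b 1 1| with hKdef
  have hK : 0 ≤ K := by positivity
  -- pointwise bounds on Q1, Q2
  have hQ1pt : ∀ s ∈ Set.Icc r0 t, 0 ≤ g1 s →
      Q1 s ≤ K * (max (g1 s) 0 + max (g2 s) 0) := by
    intro s hs hg
    have hep : (0:ℝ) < Real.exp (ξ s) := Real.exp_pos _
    have hen : (0:ℝ) < Real.exp (-ξ s) := Real.exp_pos _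
    have hee : Real.exp (ξ s) * Real.exp (-ξ s) = 1 := by
      rw [← Real.exp_add]; simp
    have hU1u1 : (U s).1 ≤ (u s).1 := by
      have : 0 ≤ (u s).1 - (U s).1 := hg
      linarith
    have hcomp := phi_comp1 b c1 hc1 m1 hsupp1 hmom1 hadm1
      (a := Real.exp (-ξ s) * (u s).1) (c := Real.exp (-ξ s) * (u s).2)
      (a' := Real.exp (-ξ s) * (U s).1) (c' := Real.exp (-ξ s) * (U s).2)
      (mul_nonneg hen.le (hUquad s hs).1)
      (mul_le_mul_of_nonneg_left hU1u1 hen.le)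
      (mul_nonneg hen.le (hUquad s hs).2)
      (mul_nonneg hen.le (huquad s hs).2)
    have hQform : Q1 s = Real.exp (ξ s) *
        (phiTilde1 b c1 m1 (Real.exp (-ξ s) * (U s).1, Real.exp (-ξ s) * (U s).2)
          - phi1 b c1 m1 (Real.exp (-ξ s) * (u s).1, Real.exp (-ξ s) * (u s).2)) := by
      rw [hQ1def]
      simp only [hP1def, hPt1def, hsmul_u, hsmul_U]
      ring
    have hstep : Q1 s ≤ Real.exp (ξ s) *
        (|b 0 0| * (Real.exp (-ξ s) * (u s).1 - Real.exp (-ξ s) * (U s).1)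
          + |b 0 1| * max (Real.exp (-ξ s) * (u s).2 - Real.exp (-ξ s) * (U s).2) 0) := by
      rw [hQform]
      exact mul_le_mul_of_nonneg_left hcomp hep.le
    have hX1 : Real.exp (ξ s) * (Real.exp (-ξ s) * (u s).1 - Real.exp (-ξ s) * (U s).1)
        = g1 s := by
      rw [hg1def]
      simp only []
      calc Real.exp (ξ s) * (Real.exp (-ξ s) * (u s).1 - Real.exp (-ξ s) * (U s).1)
          = (Real.exp (ξ s) * Real.exp (-ξ s)) * ((u s).1 - (U s).1) := by ring
        _ = (u s).1 - (U s).1 := by rw [hee]; ring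
    have hX2' : Real.exp (ξ s) * (Real.exp (-ξ s) * (u s).2 - Real.exp (-ξ s) * (U s).2)
        = g2 s := by
      rw [hg2def]
      simp only []
      calc Real.exp (ξ s) * (Real.exp (-ξ s) * (u s).2 - Real.exp (-ξ s) * (U s).2)
          = (Real.exp (ξ s) * Real.exp (-ξ s)) * ((u s).2 - (U s).2) := by ring
        _ = (u s).2 - (U s).2 := by rw [hee]; ring
    have hX2 : Real.exp (ξ s) *
        max (Real.exp (-ξ s) * (u s).2 - Real.exp (-ξ s) * (U s).2) 0 = max (g2 s) 0 := by
      rcases le_total 0 (Real.exp (-ξ s) * (u s).2 - Real.exp (-ξ s) * (U s).2) with h | h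
      · rw [max_eq_left h, hX2']
        rw [← hX2']
        rw [max_eq_left (mul_nonneg hep.le h), hX2']
      · rw [max_eq_right h, mul_zero]
        have : g2 s ≤ 0 := by
          rw [← hX2']
          exact mul_nonpos_of_nonneg_of_nonpos hep.le h
        rw [max_eq_right this]
    have hfin : Q1 s ≤ |b 0 0| * g1 s + |b 0 1| * max (g2 s) 0 := by
      calc Q1 s ≤ _ := hstep
        _ = |b 0 0| * (Real.exp (ξ s) * (Real.exp (-ξ s) * (u s).1
              - Real.exp (-ξ s) * (U s).1))
            + |b 0 1| * (Real.exp (ξ s) *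
              max (Real.exp (-ξ s) * (u s).2 - Real.exp (-ξ s) * (U s).2) 0) := by ring
        _ = |b 0 0| * g1 s + |b 0 1| * max (g2 s) 0 := by rw [hX1, hX2]
    have hm1 : g1 s ≤ max (g1 s) 0 := le_max_left _ _
    have hm2 : (0:ℝ) ≤ max (g1 s) 0 := le_max_right _ _
    have hm3 : (0:ℝ) ≤ max (g2 s) 0 := le_max_right _ _
    have hKb : |b 0 0| ≤ K := by
      rw [hKdef]; linarith [abs_nonneg (b 0 1), abs_nonneg (b 1 0), abs_nonneg (b 1 1)]
    have hKb' : |b 0 1| ≤ K := by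
      rw [hKdef]; linarith [abs_nonneg (b 0 0), abs_nonneg (b 1 0), abs_nonneg (b 1 1)]
    have t1 : |b 0 0| * g1 s ≤ K * max (g1 s) 0 :=
      (mul_le_mul_of_nonneg_left hm1 (abs_nonneg _)).trans
        (mul_le_mul_of_nonneg_right hKb hm2)
    have t2 : |b 0 1| * max (g2 s) 0 ≤ K * max (g2 s) 0 :=
      mul_le_mul_of_nonneg_right hKb' hm3
    have : K * (max (g1 s) 0 + max (g2 s) 0) = K * max (g1 s) 0 + K * max (g2 s) 0 := by
      ring
    linarith [hfin, t1, t2]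
  have hQ2pt : ∀ s ∈ Set.Icc r0 t, 0 ≤ g2 s →
      Q2 s ≤ K * (max (g1 s) 0 + max (g2 s) 0) := by
    intro s hs hg
    have hep : (0:ℝ) < Real.exp (ξ s) := Real.exp_pos _
    have hen : (0:ℝ) < Real.exp (-ξ s) := Real.exp_pos _
    have hee : Real.exp (ξ s) * Real.exp (-ξ s) = 1 := by
      rw [← Real.exp_add]; simp
    have hU2u2 : (U s).2 ≤ (u s).2 := by
      have : 0 ≤ (u s).2 - (U s).2 := hg
      linarith
    have hcomp := phi_comp2 b c2 hc2 m2 hsupp2 hmom2 hadm2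
      (a := Real.exp (-ξ s) * (u s).1) (c := Real.exp (-ξ s) * (u s).2)
      (a' := Real.exp (-ξ s) * (U s).1) (c' := Real.exp (-ξ s) * (U s).2)
      (mul_nonneg hen.le (hUquad s hs).2)
      (mul_le_mul_of_nonneg_left hU2u2 hen.le)
      (mul_nonneg hen.le (hUquad s hs).1)
      (mul_nonneg hen.le (huquad s hs).1)
    have hQform : Q2 s = Real.exp (ξ s) *
        (phiTilde2 b c2 m2 (Real.exp (-ξ s) * (U s).1, Real.exp (-ξ s) * (U s).2)
          - phi2 b c2 m2 (Real.exp (-ξ s) * (u s).1, Real.exp (-ξ s) * (u s).2)) := by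
      rw [hQ2def]
      simp only [hP2def, hPt2def, hsmul_u, hsmul_U]
      ring
    have hstep : Q2 s ≤ Real.exp (ξ s) *
        (|b 1 1| * (Real.exp (-ξ s) * (u s).2 - Real.exp (-ξ s) * (U s).2)
          + |b 1 0| * max (Real.exp (-ξ s) * (u s).1 - Real.exp (-ξ s) * (U s).1) 0) := by
      rw [hQform]
      exact mul_le_mul_of_nonneg_left hcomp hep.le
    have hX1 : Real.exp (ξ s) * (Real.exp (-ξ s) * (u s).2 - Real.exp (-ξ s) * (U s).2)
        = g2 s := by
      rw [hg2def]
      simp only []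
      calc Real.exp (ξ s) * (Real.exp (-ξ s) * (u s).2 - Real.exp (-ξ s) * (U s).2)
          = (Real.exp (ξ s) * Real.exp (-ξ s)) * ((u s).2 - (U s).2) := by ring
        _ = (u s).2 - (U s).2 := by rw [hee]; ring
    have hX2' : Real.exp (ξ s) * (Real.exp (-ξ s) * (u s).1 - Real.exp (-ξ s) * (U s).1)
        = g1 s := by
      rw [hg1def]
      simp only []
      calc Real.exp (ξ s) * (Real.exp (-ξ s) * (u s).1 - Real.exp (-ξ s) * (U s).1)
          = (Real.exp (ξ s) * Real.exp (-ξ s)) * ((u s).1 - (U s).1) := by ring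
        _ = (u s).1 - (U s).1 := by rw [hee]; ring
    have hX2 : Real.exp (ξ s) *
        max (Real.exp (-ξ s) * (u s).1 - Real.exp (-ξ s) * (U s).1) 0 = max (g1 s) 0 := by
      rcases le_total 0 (Real.exp (-ξ s) * (u s).1 - Real.exp (-ξ s) * (U s).1) with h | h
      · rw [max_eq_left h]
        rw [← hX2']
        rw [max_eq_left]
        rw [← hX2'] at *
        exact mul_nonneg hep.le h
      · rw [max_eq_right h, mul_zero]
        have : g1 s ≤ 0 := by
          rw [← hX2']
          exact mul_nonpos_of_nonneg_of_nonpos hep.le h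
        rw [max_eq_right this]
    have hfin : Q2 s ≤ |b 1 1| * g2 s + |b 1 0| * max (g1 s) 0 := by
      calc Q2 s ≤ _ := hstep
        _ = |b 1 1| * (Real.exp (ξ s) * (Real.exp (-ξ s) * (u s).2
              - Real.exp (-ξ s) * (U s).2))
            + |b 1 0| * (Real.exp (ξ s) *
              max (Real.exp (-ξ s) * (u s).1 - Real.exp (-ξ s) * (U s).1) 0) := by ring
        _ = |b 1 1| * g2 s + |b 1 0| * max (g1 s) 0 := by rw [hX1, hX2]
    have hm1 : g2 s ≤ max (g2 s) 0 := le_max_left _ _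
    have hm2 : (0:ℝ) ≤ max (g1 s) 0 := le_max_right _ _
    have hm3 : (0:ℝ) ≤ max (g2 s) 0 := le_max_right _ _
    have hKb : |b 1 1| ≤ K := by
      rw [hKdef]; linarith [abs_nonneg (b 0 1), abs_nonneg (b 1 0), abs_nonneg (b 0 0)]
    have hKb' : |b 1 0| ≤ K := by
      rw [hKdef]; linarith [abs_nonneg (b 0 0), abs_nonneg (b 0 1), abs_nonneg (b 1 1)]
    have t1 : |b 1 1| * g2 s ≤ K * max (g2 s) 0 :=
      (mul_le_mul_of_nonneg_left hm1 (abs_nonneg _)).trans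
        (mul_le_mul_of_nonneg_right hKb hm3)
    have t2 : |b 1 0| * max (g1 s) 0 ≤ K * max (g1 s) 0 :=
      mul_le_mul_of_nonneg_right hKb' hm2
    have : K * (max (g1 s) 0 + max (g2 s) 0) = K * max (g1 s) 0 + K * max (g2 s) 0 := by
      ring
    linarith [hfin, t1, t2]
  -- apply the Grönwall lemma
  have hmain := gronwall r0 t hr0 g1 g2 Q1 Q2 hg1c hg2c hIntQ1 hIntQ2 heqg1 heqg2
    K hK hQ1pt hQ2pt
  intro r hr
  obtain ⟨h1, h2⟩ := hmain r hr
  constructor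
  · have : (u r).1 - (U r).1 ≤ 0 := h1
    linarith
  · have : (u r).2 - (U r).2 ≤ 0 := h2
    linarith
end
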